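/- arXiv:1501.04867 — 2 statements merged into one kernel-verified Lean document; each statement's English description precedes it below -/
import Mathlib

section
/- Let A, B, X, Y be jointly distributed random variables with finite ranges such that the triple (A,X,Y) satisfies condition (B): for all a, x, y, if p(a,x) > 0 and p(a,y) > 0 then p(a,x,y) > 0. If moreover p(a,x)·p(a,y)·p(x,y) ≤ p(a)·p(x)·p(y)·p(a,x,y) for all a, x, y, then I(A:B) ≤ I(A:B | X) + I(A:B | Y). -/
open Finset

noncomputable section

/-- Probability of an event under a distribution on a finite sample space. -/
def pr {Ω : Type*} [Fintype Ω] (p : Ω → ℝ) (E : Set Ω) : ℝ :=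
  ∑ ω, E.indicator p ω

/-- `p` is a probability mass function on the finite sample space `Ω`. -/
def IsPMF {Ω : Type*} [Fintype Ω] (p : Ω → ℝ) : Prop :=
  (∀ ω, 0 ≤ p ω) ∧ ∑ ω, p ω = 1

/-- Shannon entropy (base 2) of a random variable `V` on a finite sample space. -/
def ent {Ω β : Type*} [Fintype Ω] [Fintype β] (p : Ω → ℝ) (V : Ω → β) : ℝ :=
  -∑ v, pr p {ω | V ω = v} * Real.logb 2 (pr p {ω | V ω = v})

/-- Conditional Shannon entropy (base 2): `H(V | W)`. -/
def condEnt {Ω β γ : Type*} [Fintype Ω] [Fintype β] [Fintype γ]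
    (p : Ω → ℝ) (V : Ω → β) (W : Ω → γ) : ℝ :=
  ent p (fun ω => (V ω, W ω)) - ent p W

/-- Mutual information (base 2): `I(V : W)`. -/
def mi {Ω β γ : Type*} [Fintype Ω] [Fintype β] [Fintype γ]
    (p : Ω → ℝ) (V : Ω → β) (W : Ω → γ) : ℝ :=
  ent p V + ent p W - ent p (fun ω => (V ω, W ω))

/-- Conditional mutual information (base 2): `I(V : W | U)`. -/
def cmi {Ω β γ δ : Type*} [Fintype Ω] [Fintype β] [Fintype γ] [Fintype δ]
    (p : Ω → ℝ) (V : Ω → β) (W : Ω → γ) (U : Ω → δ) : ℝ :=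
  ent p (fun ω => (V ω, U ω)) + ent p (fun ω => (W ω, U ω))
    - ent p (fun ω => (V ω, W ω, U ω)) - ent p U

end

/-! ### Auxiliary lemmas about `pr` -/

section PrAux

variable {Ω : Type*} [Fintype Ω]

lemma pr_nonneg' {p : Ω → ℝ} (hp : ∀ ω, 0 ≤ p ω) (E : Set Ω) : 0 ≤ pr p E := by
  classical
  exact Finset.sum_nonneg fun ω _ => Set.indicator_nonneg (fun ω _ => hp ω) ω

lemma pr_congr' (p : Ω → ℝ) {E F : Set Ω} (h : ∀ ω, ω ∈ E ↔ ω ∈ F) :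
    pr p E = pr p F := by
  have : E = F := Set.ext h
  rw [this]

lemma pr_split' {γ : Type*} [Fintype γ] (p : Ω → ℝ) (E : Set Ω) (g : Ω → γ) :
    pr p E = ∑ t, pr p {ω | ω ∈ E ∧ g ω = t} := by
  classical
  unfold pr
  rw [Finset.sum_comm]
  refine Finset.sum_congr rfl fun ω _ => ?_
  by_cases h : ω ∈ E
  · have hs : (∑ t : γ, ({ω' | ω' ∈ E ∧ g ω' = t}).indicator p ω)
        = ({ω' | ω' ∈ E ∧ g ω' = g ω}).indicator p ω := by
      refine Finset.sum_eq_single (g ω) (fun t _ ht => ?_) (fun h' => absurd (Finset.mem_univ _) h')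
      exact Set.indicator_of_notMem (fun hc => ht hc.2.symm) p
    rw [Set.indicator_of_mem h, hs, Set.indicator_of_mem (show ω ∈ {ω' | ω' ∈ E ∧ g ω' = g ω} from ⟨h, rfl⟩)]
  · rw [Set.indicator_of_notMem h]
    exact (Finset.sum_eq_zero fun t _ => Set.indicator_of_notMem (fun hc => h hc.1) p).symm

lemma pr_univ' (p : Ω → ℝ) : pr p Set.univ = ∑ ω, p ω := by
  unfold pr
  simp

end PrAux

section EntAux

variable {Ω : Type*} [Fintype Ω]

lemma ent_pair' {κ₁ κ₂ : Type*} [Fintype κ₁] [Fintype κ₂] (p : Ω → ℝ)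
    (V : Ω → κ₁) (W : Ω → κ₂) :
    ent p (fun ω => (V ω, W ω))
      = -∑ v, ∑ t, pr p {ω | V ω = v ∧ W ω = t}
          * Real.logb 2 (pr p {ω | V ω = v ∧ W ω = t}) := by
  unfold ent
  rw [Fintype.sum_prod_type]
  congr 1
  refine Finset.sum_congr rfl fun v _ => Finset.sum_congr rfl fun t _ => ?_
  have h : {ω | (V ω, W ω) = (v, t)} = {ω | V ω = v ∧ W ω = t} := by
    ext ω; simp [Prod.ext_iff]
  rw [h]

lemma ent_triple' {κ₁ κ₂ κ₃ : Type*} [Fintype κ₁] [Fintype κ₂] [Fintype κ₃] (p : Ω → ℝ)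
    (V : Ω → κ₁) (W : Ω → κ₂) (U : Ω → κ₃) :
    ent p (fun ω => (V ω, W ω, U ω))
      = -∑ v, ∑ t, ∑ u, pr p {ω | V ω = v ∧ W ω = t ∧ U ω = u}
          * Real.logb 2 (pr p {ω | V ω = v ∧ W ω = t ∧ U ω = u}) := by
  unfold ent
  rw [Fintype.sum_prod_type]
  congr 1
  refine Finset.sum_congr rfl fun v _ => ?_
  rw [Fintype.sum_prod_type]
  refine Finset.sum_congr rfl fun t _ => Finset.sum_congr rfl fun u _ => ?_
  have h : {ω | (V ω, W ω, U ω) = (v, t, u)} = {ω | V ω = v ∧ W ω = t ∧ U ω = u} := by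
    ext ω; simp [Prod.ext_iff]
  rw [h]

end EntAux

/-! ### Marginals of a 4-index array -/

set_option linter.unusedSectionVars false

section Marginals

variable {I J K L : Type*} [Fintype I] [Fintype J] [Fintype K] [Fintype L]

def cABX (F : I → J → K → L → ℝ) (a : I) (b : J) (x : K) : ℝ := ∑ y, F a b x y
def cABY (F : I → J → K → L → ℝ) (a : I) (b : J) (y : L) : ℝ := ∑ x, F a b x y
def cAB (F : I → J → K → L → ℝ) (a : I) (b : J) : ℝ := ∑ x, cABX F a b x
def cAXY (F : I → J → K → L → ℝ) (a : I) (x : K) (y : L) : ℝ := ∑ b, F a b x y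
def cAX (F : I → J → K → L → ℝ) (a : I) (x : K) : ℝ := ∑ b, cABX F a b x
def cAY (F : I → J → K → L → ℝ) (a : I) (y : L) : ℝ := ∑ b, cABY F a b y
def cBX (F : I → J → K → L → ℝ) (b : J) (x : K) : ℝ := ∑ a, cABX F a b x
def cBY (F : I → J → K → L → ℝ) (b : J) (y : L) : ℝ := ∑ a, cABY F a b y
def cXY (F : I → J → K → L → ℝ) (x : K) (y : L) : ℝ := ∑ a, cAXY F a x y
def cA (F : I → J → K → L → ℝ) (a : I) : ℝ := ∑ b, cAB F a b
def cB (F : I → J → K → L → ℝ) (b : J) : ℝ := ∑ a, cAB F a b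
def cX (F : I → J → K → L → ℝ) (x : K) : ℝ := ∑ b, cBX F b x
def cY (F : I → J → K → L → ℝ) (y : L) : ℝ := ∑ b, cBY F b y

/-- natural-log `t log t` -/
noncomputable def plog (t : ℝ) : ℝ := t * Real.log t

variable (F : I → J → K → L → ℝ)

lemma cAB_eq_sum_cABY (a : I) (b : J) : cAB F a b = ∑ y, cABY F a b y := by
  unfold cAB cABX cABY; exact Finset.sum_comm

lemma cB_eq_sum_cBX (b : J) : cB F b = ∑ x, cBX F b x := by
  unfold cB cAB cBX; exact Finset.sum_comm

lemma cB_eq_sum_cBY (b : J) : cB F b = ∑ y, cBY F b y := by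
  unfold cB cBY
  rw [show (∑ a, cAB F a b) = ∑ a, ∑ y, cABY F a b y from
    Finset.sum_congr rfl fun a _ => cAB_eq_sum_cABY F a b]
  exact Finset.sum_comm

lemma cXY_eq_sum (x : K) (y : L) : cXY F x y = ∑ a, ∑ b, F a b x y := rfl

end Marginals

/-! ### The core inequality -/

theorem ingleton_core {I J K L : Type*} [Fintype I] [Fintype J] [Fintype K] [Fintype L]
    (F : I → J → K → L → ℝ) (hF : ∀ a b x y, 0 ≤ F a b x y)
    (htot : ∑ a, cA F a = 1)
    (hB : ∀ a x y, 0 < cAX F a x → 0 < cAY F a y → 0 < cAXY F a x y)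
    (hineq : ∀ a x y, cAX F a x * cAY F a y * cXY F x y
      ≤ cA F a * cX F x * cY F y * cAXY F a x y) :
    (∑ a, ∑ x, plog (cAX F a x)) + (∑ a, ∑ y, plog (cAY F a y))
      + (∑ b, ∑ x, plog (cBX F b x)) + (∑ b, ∑ y, plog (cBY F b y))
      + (∑ a, ∑ b, plog (cAB F a b))
    ≤ (∑ a, ∑ b, ∑ x, plog (cABX F a b x)) + (∑ a, ∑ b, ∑ y, plog (cABY F a b y))
      + (∑ a, plog (cA F a)) + (∑ b, plog (cB F b))
      + (∑ x, plog (cX F x)) + (∑ y, plog (cY F y)) := by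
  classical
  -- nonnegativity of all marginals
  have hABX : ∀ a b x, 0 ≤ cABX F a b x := fun a b x => Finset.sum_nonneg fun y _ => hF a b x y
  have hABY : ∀ a b y, 0 ≤ cABY F a b y := fun a b y => Finset.sum_nonneg fun x _ => hF a b x y
  have hAB : ∀ a b, 0 ≤ cAB F a b := fun a b => Finset.sum_nonneg fun x _ => hABX a b x
  have hAXY : ∀ a x y, 0 ≤ cAXY F a x y := fun a x y => Finset.sum_nonneg fun b _ => hF a b x y
  have hAX : ∀ a x, 0 ≤ cAX F a x := fun a x => Finset.sum_nonneg fun b _ => hABX a b x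
  have hAY : ∀ a y, 0 ≤ cAY F a y := fun a y => Finset.sum_nonneg fun b _ => hABY a b y
  have hBXn : ∀ b x, 0 ≤ cBX F b x := fun b x => Finset.sum_nonneg fun a _ => hABX a b x
  have hBYn : ∀ b y, 0 ≤ cBY F b y := fun b y => Finset.sum_nonneg fun a _ => hABY a b y
  have hXY : ∀ x y, 0 ≤ cXY F x y := fun x y => Finset.sum_nonneg fun a _ => hAXY a x y
  have hA : ∀ a, 0 ≤ cA F a := fun a => Finset.sum_nonneg fun b _ => hAB a b
  have hBn : ∀ b, 0 ≤ cB F b := fun b => Finset.sum_nonneg fun a _ => hAB a b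
  have hXn : ∀ x, 0 ≤ cX F x := fun x => Finset.sum_nonneg fun b _ => hBXn b x
  have hYn : ∀ y, 0 ≤ cY F y := fun y => Finset.sum_nonneg fun b _ => hBYn b y
  -- the coupling q and the comparison weight w
  set q : I → J → K → L → ℝ :=
    fun a b x y => if cAB F a b = 0 then 0 else cABX F a b x * cABY F a b y / cAB F a b
    with hq_def
  set w : I → J → K → L → ℝ :=
    fun a b x y => cAXY F a x y *
      (if cXY F x y = 0 ∨ cB F b = 0 then 0
       else cBX F b x * cBY F b y / (cB F b * cXY F x y))
    with hw_def
  have hq0 : ∀ a b x y, 0 ≤ q a b x y := by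
    intro a b x y
    by_cases h : cAB F a b = 0
    · simp [hq_def, h]
    · simp only [hq_def, if_neg h]
      exact div_nonneg (mul_nonneg (hABX a b x) (hABY a b y)) (hAB a b)
  have hw0 : ∀ a b x y, 0 ≤ w a b x y := by
    intro a b x y
    refine mul_nonneg (hAXY a x y) ?_
    by_cases h : cXY F x y = 0 ∨ cB F b = 0
    · simp [h]
    · rw [if_neg h]
      exact div_nonneg (mul_nonneg (hBXn b x) (hBYn b y)) (mul_nonneg (hBn b) (hXY x y))
  have hqy : ∀ a b x, ∑ y, q a b x y = cABX F a b x := by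
    intro a b x
    by_cases h : cAB F a b = 0
    · have h1 : cABX F a b x ≤ cAB F a b :=
        Finset.single_le_sum (fun x' _ => hABX a b x') (Finset.mem_univ x)
      have h2 : cABX F a b x = 0 := le_antisymm (h ▸ h1) (hABX a b x)
      simp [hq_def, h, h2]
    · simp only [hq_def, if_neg h]
      rw [← Finset.sum_div, ← Finset.mul_sum, ← cAB_eq_sum_cABY, mul_div_assoc, div_self h,
        mul_one]
  have hqx : ∀ a b y, ∑ x, q a b x y = cABY F a b y := by
    intro a b y
    by_cases h : cAB F a b = 0
    · have h1 : cABY F a b y ≤ cAB F a b := by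
        rw [cAB_eq_sum_cABY]
        exact Finset.single_le_sum (fun y' _ => hABY a b y') (Finset.mem_univ y)
      have h2 : cABY F a b y = 0 := le_antisymm (h ▸ h1) (hABY a b y)
      simp [hq_def, h, h2]
    · simp only [hq_def, if_neg h]
      rw [← Finset.sum_div, ← Finset.sum_mul]
      have : (∑ x, cABX F a b x) = cAB F a b := rfl
      rw [this, mul_comm, mul_div_assoc, div_self h, mul_one]
  -- pointwise key inequality
  have key : ∀ a b x y,
      q a b x y - w a b x y ≤
      q a b x y * Real.log (cABX F a b x) + q a b x y * Real.log (cABY F a b y)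
        - q a b x y * Real.log (cAB F a b)
        + (q a b x y * Real.log (cA F a) + q a b x y * Real.log (cB F b)
           + q a b x y * Real.log (cX F x) + q a b x y * Real.log (cY F y))
        - (q a b x y * Real.log (cAX F a x) + q a b x y * Real.log (cAY F a y)
           + q a b x y * Real.log (cBX F b x) + q a b x y * Real.log (cBY F b y)) := by
    intro a b x y
    by_cases hq : q a b x y = 0
    · rw [hq]
      simp only [zero_mul, add_zero, sub_zero, zero_add, zero_sub, sub_zero]
      simp only [zero_sub, neg_le, neg_zero, neg_neg]
      -- goal should reduce to -w ≤ 0 or 0 ≤ w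
      linarith [hw0 a b x y]
    · have hqpos : 0 < q a b x y := lt_of_le_of_ne (hq0 a b x y) (Ne.symm hq)
      have habne : cAB F a b ≠ 0 := by
        intro h; apply hq; simp [hq_def, h]
      have habpos : 0 < cAB F a b := lt_of_le_of_ne (hAB a b) (Ne.symm habne)
      have hq_eq : q a b x y = cABX F a b x * cABY F a b y / cAB F a b := by
        simp [hq_def, habne]
      have hprod : cABX F a b x * cABY F a b y = q a b x y * cAB F a b := by
        rw [hq_eq]; field_simp
      have h2 : 0 < cABX F a b x * cABY F a b y := by
        rw [hprod]; exact mul_pos hqpos habpos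
      have habxpos : 0 < cABX F a b x := by
        rcases lt_or_eq_of_le (hABX a b x) with h | h
        · exact h
        · exfalso; rw [← h, zero_mul] at h2; exact lt_irrefl 0 h2
      have habypos : 0 < cABY F a b y := by
        rcases lt_or_eq_of_le (hABY a b y) with h | h
        · exact h
        · exfalso; rw [← h, mul_zero] at h2; exact lt_irrefl 0 h2
      have haxpos : 0 < cAX F a x :=
        lt_of_lt_of_le habxpos (Finset.single_le_sum (fun b' _ => hABX a b' x) (Finset.mem_univ b))
      have haypos : 0 < cAY F a y :=
        lt_of_lt_of_le habypos (Finset.single_le_sum (fun b' _ => hABY a b' y) (Finset.mem_univ b))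
      have hbxpos : 0 < cBX F b x :=
        lt_of_lt_of_le habxpos (Finset.single_le_sum (fun a' _ => hABX a' b x) (Finset.mem_univ a))
      have hbypos : 0 < cBY F b y :=
        lt_of_lt_of_le habypos (Finset.single_le_sum (fun a' _ => hABY a' b y) (Finset.mem_univ a))
      have hapos : 0 < cA F a :=
        lt_of_lt_of_le habpos (Finset.single_le_sum (fun b' _ => hAB a b') (Finset.mem_univ b))
      have hbpos : 0 < cB F b :=
        lt_of_lt_of_le habpos (Finset.single_le_sum (fun a' _ => hAB a' b) (Finset.mem_univ a))
      have haxypos : 0 < cAXY F a x y := hB a x y haxpos haypos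
      have hxypos : 0 < cXY F x y :=
        lt_of_lt_of_le haxypos (Finset.single_le_sum (fun a' _ => hAXY a' x y) (Finset.mem_univ a))
      have hxpos : 0 < cX F x :=
        lt_of_lt_of_le hbxpos (Finset.single_le_sum (fun b' _ => hBXn b' x) (Finset.mem_univ b))
      have hypos : 0 < cY F y :=
        lt_of_lt_of_le hbypos (Finset.single_le_sum (fun b' _ => hBYn b' y) (Finset.mem_univ b))
      have hcond : ¬(cXY F x y = 0 ∨ cB F b = 0) := by
        push_neg; exact ⟨ne_of_gt hxypos, ne_of_gt hbpos⟩
      have hw_eq : w a b x y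
          = cAXY F a x y * (cBX F b x * cBY F b y / (cB F b * cXY F x y)) := by
        simp only [hw_def, if_neg hcond]
      have hwpos : 0 < w a b x y := by
        rw [hw_eq]
        exact mul_pos haxypos (div_pos (mul_pos hbxpos hbypos) (mul_pos hbpos hxypos))
      set u : ℝ := cAX F a x * cAY F a y * (cBX F b x * cBY F b y)
          / (cA F a * cB F b * (cX F x * cY F y)) with hu_def
      have hupos : 0 < u := by
        rw [hu_def]
        exact div_pos (mul_pos (mul_pos haxpos haypos) (mul_pos hbxpos hbypos))
          (mul_pos (mul_pos hapos hbpos) (mul_pos hxpos hypos))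
      have huw : u ≤ w a b x y := by
        rw [hw_eq, ← mul_div_assoc, hu_def,
          div_le_div_iff₀ (mul_pos (mul_pos hapos hbpos) (mul_pos hxpos hypos))
            (mul_pos hbpos hxypos)]
        have hh := mul_le_mul_of_nonneg_right (hineq a x y)
          (mul_nonneg (mul_nonneg (hBXn b x) (hBYn b y)) (hBn b))
        nlinarith [hh]
      have hlogq : Real.log (q a b x y)
          = Real.log (cABX F a b x) + Real.log (cABY F a b y) - Real.log (cAB F a b) := by
        rw [hq_eq, Real.log_div (ne_of_gt h2) habne,
          Real.log_mul (ne_of_gt habxpos) (ne_of_gt habypos)]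
      have hlogu : Real.log u
          = Real.log (cAX F a x) + Real.log (cAY F a y) + Real.log (cBX F b x)
            + Real.log (cBY F b y)
            - (Real.log (cA F a) + Real.log (cB F b) + Real.log (cX F x) + Real.log (cY F y)) := by
        rw [hu_def, Real.log_div (ne_of_gt (mul_pos (mul_pos haxpos haypos)
            (mul_pos hbxpos hbypos))) (ne_of_gt (mul_pos (mul_pos hapos hbpos)
            (mul_pos hxpos hypos))),
          Real.log_mul (ne_of_gt (mul_pos haxpos haypos)) (ne_of_gt (mul_pos hbxpos hbypos)),
          Real.log_mul (ne_of_gt haxpos) (ne_of_gt haypos),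
          Real.log_mul (ne_of_gt hbxpos) (ne_of_gt hbypos),
          Real.log_mul (ne_of_gt (mul_pos hapos hbpos)) (ne_of_gt (mul_pos hxpos hypos)),
          Real.log_mul (ne_of_gt hapos) (ne_of_gt hbpos),
          Real.log_mul (ne_of_gt hxpos) (ne_of_gt hypos)]
        ring
      have hRHS : q a b x y * Real.log (cABX F a b x) + q a b x y * Real.log (cABY F a b y)
            - q a b x y * Real.log (cAB F a b)
            + (q a b x y * Real.log (cA F a) + q a b x y * Real.log (cB F b)
               + q a b x y * Real.log (cX F x) + q a b x y * Real.log (cY F y))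
            - (q a b x y * Real.log (cAX F a x) + q a b x y * Real.log (cAY F a y)
               + q a b x y * Real.log (cBX F b x) + q a b x y * Real.log (cBY F b y))
          = q a b x y * (Real.log (q a b x y) - Real.log u) := by
        rw [hlogq, hlogu]; ring
      rw [hRHS]
      have h1 : Real.log u ≤ Real.log (w a b x y) := Real.log_le_log hupos huw
      have hl : Real.log (w a b x y) - Real.log (q a b x y) ≤ w a b x y / q a b x y - 1 := by
        rw [← Real.log_div (ne_of_gt hwpos) (ne_of_gt hqpos)]
        exact Real.log_le_sub_one_of_pos (div_pos hwpos hqpos)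
      have hl2 : q a b x y * (Real.log (w a b x y) - Real.log (q a b x y))
          ≤ w a b x y - q a b x y := by
        have := mul_le_mul_of_nonneg_left hl (le_of_lt hqpos)
        calc q a b x y * (Real.log (w a b x y) - Real.log (q a b x y))
            ≤ q a b x y * (w a b x y / q a b x y - 1) := this
          _ = w a b x y - q a b x y := by field_simp
      have h3 : q a b x y * (Real.log (q a b x y) - Real.log (w a b x y))
          ≤ q a b x y * (Real.log (q a b x y) - Real.log u) :=
        mul_le_mul_of_nonneg_left (by linarith) (le_of_lt hqpos)
      linarith

  -- helper to pull constants out of double sums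
  have pull2 : ∀ {M N : Type} , True := fun {M N} => trivial
  clear pull2
  -- total mass of q
  have hqab : ∀ a b, ∑ x, ∑ y, q a b x y = cAB F a b := by
    intro a b
    calc ∑ x, ∑ y, q a b x y = ∑ x, cABX F a b x :=
          Finset.sum_congr rfl fun x _ => hqy a b x
      _ = cAB F a b := rfl
  have hqtot : ∑ a, ∑ b, ∑ x, ∑ y, q a b x y = 1 := by
    calc ∑ a, ∑ b, ∑ x, ∑ y, q a b x y = ∑ a, ∑ b, cAB F a b :=
          Finset.sum_congr rfl fun a _ => Finset.sum_congr rfl fun b _ => hqab a b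
      _ = ∑ a, cA F a := rfl
      _ = 1 := htot
  -- total mass of w is at most 1
  have hwa : ∀ b x y, ∑ a, w a b x y
      ≤ (if cB F b = 0 then 0 else cBX F b x * cBY F b y / cB F b) := by
    intro b x y
    by_cases h : cXY F x y = 0 ∨ cB F b = 0
    · have hz : ∀ a, w a b x y = 0 := fun a => by simp [hw_def, h]
      rw [Finset.sum_eq_zero fun a _ => hz a]
      by_cases h2 : cB F b = 0
      · simp [h2]
      · rw [if_neg h2]
        exact div_nonneg (mul_nonneg (hBXn b x) (hBYn b y)) (hBn b)
    · push_neg at h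
      rw [if_neg h.2]
      have hne := h
      have hstep : ∑ a, w a b x y
          = (∑ a, cAXY F a x y) * (cBX F b x * cBY F b y / (cB F b * cXY F x y)) := by
        rw [Finset.sum_mul]
        refine Finset.sum_congr rfl fun a _ => ?_
        simp only [hw_def, if_neg (show ¬(cXY F x y = 0 ∨ cB F b = 0) by push_neg; exact h)]
      rw [hstep]
      have hXYsum : (∑ a, cAXY F a x y) = cXY F x y := rfl
      rw [hXYsum]
      obtain ⟨hxyne, hbne⟩ := h
      have heq : cXY F x y * (cBX F b x * cBY F b y / (cB F b * cXY F x y))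
          = cBX F b x * cBY F b y / cB F b := by
        field_simp [hxyne, hbne]
      exact le_of_eq heq
  have hwbxy : ∀ b, (∑ x, ∑ y, (if cB F b = 0 then 0 else cBX F b x * cBY F b y / cB F b))
      ≤ cB F b := by
    intro b
    by_cases h : cB F b = 0
    · simp [h]
    · simp only [if_neg h]
      have hxsum : ∀ x, ∑ y, cBX F b x * cBY F b y / cB F b = cBX F b x := by
        intro x
        rw [← Finset.sum_div, ← Finset.mul_sum, ← cB_eq_sum_cBY, mul_div_assoc, div_self h,
          mul_one]
      calc (∑ x, ∑ y, cBX F b x * cBY F b y / cB F b) = ∑ x, cBX F b x :=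
            Finset.sum_congr rfl fun x _ => hxsum x
        _ = cB F b := (cB_eq_sum_cBX F b).symm
        _ ≤ cB F b := le_refl _
  have hBtot : ∑ b, cB F b = 1 := by
    have : (∑ b, cB F b) = ∑ b, ∑ a, cAB F a b := rfl
    rw [this, Finset.sum_comm]
    exact htot
  have hwtot : ∑ a, ∑ b, ∑ x, ∑ y, w a b x y ≤ 1 := by
    have h1 : ∑ a, ∑ b, ∑ x, ∑ y, w a b x y = ∑ b, ∑ x, ∑ y, ∑ a, w a b x y := by
      rw [Finset.sum_comm]
      refine Finset.sum_congr rfl fun b _ => ?_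
      rw [Finset.sum_comm]
      refine Finset.sum_congr rfl fun x _ => ?_
      rw [Finset.sum_comm]
    rw [h1]
    calc ∑ b, ∑ x, ∑ y, ∑ a, w a b x y
        ≤ ∑ b, ∑ x, ∑ y, (if cB F b = 0 then 0 else cBX F b x * cBY F b y / cB F b) :=
          Finset.sum_le_sum fun b _ => Finset.sum_le_sum fun x _ =>
            Finset.sum_le_sum fun y _ => hwa b x y
      _ ≤ ∑ b, cB F b := Finset.sum_le_sum fun b _ => hwbxy b
      _ = 1 := hBtot
  -- the eleven collapsed sums
  have e1 : ∑ a, ∑ b, ∑ x, ∑ y, q a b x y * Real.log (cABX F a b x)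
      = ∑ a, ∑ b, ∑ x, plog (cABX F a b x) := by
    refine Finset.sum_congr rfl fun a _ => Finset.sum_congr rfl fun b _ =>
      Finset.sum_congr rfl fun x _ => ?_
    rw [← Finset.sum_mul, hqy a b x]; rfl
  have e2 : ∑ a, ∑ b, ∑ x, ∑ y, q a b x y * Real.log (cABY F a b y)
      = ∑ a, ∑ b, ∑ y, plog (cABY F a b y) := by
    refine Finset.sum_congr rfl fun a _ => Finset.sum_congr rfl fun b _ => ?_
    rw [Finset.sum_comm]
    refine Finset.sum_congr rfl fun y _ => ?_
    rw [← Finset.sum_mul, hqx a b y]; rfl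
  have e3 : ∑ a, ∑ b, ∑ x, ∑ y, q a b x y * Real.log (cAB F a b)
      = ∑ a, ∑ b, plog (cAB F a b) := by
    refine Finset.sum_congr rfl fun a _ => Finset.sum_congr rfl fun b _ => ?_
    calc ∑ x, ∑ y, q a b x y * Real.log (cAB F a b)
        = ∑ x, cABX F a b x * Real.log (cAB F a b) :=
          Finset.sum_congr rfl fun x _ => by rw [← Finset.sum_mul, hqy a b x]
      _ = (∑ x, cABX F a b x) * Real.log (cAB F a b) := (Finset.sum_mul _ _ _).symm
      _ = plog (cAB F a b) := rfl
  have e4 : ∑ a, ∑ b, ∑ x, ∑ y, q a b x y * Real.log (cA F a)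
      = ∑ a, plog (cA F a) := by
    refine Finset.sum_congr rfl fun a _ => ?_
    calc ∑ b, ∑ x, ∑ y, q a b x y * Real.log (cA F a)
        = ∑ b, cAB F a b * Real.log (cA F a) := by
          refine Finset.sum_congr rfl fun b _ => ?_
          calc ∑ x, ∑ y, q a b x y * Real.log (cA F a)
              = ∑ x, cABX F a b x * Real.log (cA F a) :=
                Finset.sum_congr rfl fun x _ => by rw [← Finset.sum_mul, hqy a b x]
            _ = (∑ x, cABX F a b x) * Real.log (cA F a) := (Finset.sum_mul _ _ _).symm
            _ = cAB F a b * Real.log (cA F a) := rfl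
      _ = (∑ b, cAB F a b) * Real.log (cA F a) := (Finset.sum_mul _ _ _).symm
      _ = plog (cA F a) := rfl
  have e5 : ∑ a, ∑ b, ∑ x, ∑ y, q a b x y * Real.log (cB F b)
      = ∑ b, plog (cB F b) := by
    have step : ∀ a b, ∑ x, ∑ y, q a b x y * Real.log (cB F b)
        = cAB F a b * Real.log (cB F b) := by
      intro a b
      calc ∑ x, ∑ y, q a b x y * Real.log (cB F b)
          = ∑ x, cABX F a b x * Real.log (cB F b) :=
            Finset.sum_congr rfl fun x _ => by rw [← Finset.sum_mul, hqy a b x]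
        _ = (∑ x, cABX F a b x) * Real.log (cB F b) := (Finset.sum_mul _ _ _).symm
        _ = cAB F a b * Real.log (cB F b) := rfl
    calc ∑ a, ∑ b, ∑ x, ∑ y, q a b x y * Real.log (cB F b)
        = ∑ a, ∑ b, cAB F a b * Real.log (cB F b) :=
          Finset.sum_congr rfl fun a _ => Finset.sum_congr rfl fun b _ => step a b
      _ = ∑ b, ∑ a, cAB F a b * Real.log (cB F b) := Finset.sum_comm
      _ = ∑ b, plog (cB F b) := by
          refine Finset.sum_congr rfl fun b _ => ?_
          rw [← Finset.sum_mul]; rfl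
  have e6 : ∑ a, ∑ b, ∑ x, ∑ y, q a b x y * Real.log (cX F x)
      = ∑ x, plog (cX F x) := by
    calc ∑ a, ∑ b, ∑ x, ∑ y, q a b x y * Real.log (cX F x)
        = ∑ a, ∑ b, ∑ x, cABX F a b x * Real.log (cX F x) :=
          Finset.sum_congr rfl fun a _ => Finset.sum_congr rfl fun b _ =>
            Finset.sum_congr rfl fun x _ => by rw [← Finset.sum_mul, hqy a b x]
      _ = ∑ a, ∑ x, ∑ b, cABX F a b x * Real.log (cX F x) :=
          Finset.sum_congr rfl fun a _ => Finset.sum_comm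
      _ = ∑ x, ∑ a, ∑ b, cABX F a b x * Real.log (cX F x) := Finset.sum_comm
      _ = ∑ x, plog (cX F x) := by
          refine Finset.sum_congr rfl fun x _ => ?_
          have hpull : ∑ a, ∑ b, cABX F a b x * Real.log (cX F x)
              = (∑ a, ∑ b, cABX F a b x) * Real.log (cX F x) := by
            rw [Finset.sum_mul]
            exact Finset.sum_congr rfl fun a _ => (Finset.sum_mul _ _ _).symm
          rw [hpull]
          have : (∑ a, ∑ b, cABX F a b x) = cX F x := by
            rw [Finset.sum_comm]; rfl
          rw [this]; rfl
  have e7 : ∑ a, ∑ b, ∑ x, ∑ y, q a b x y * Real.log (cY F y)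
      = ∑ y, plog (cY F y) := by
    calc ∑ a, ∑ b, ∑ x, ∑ y, q a b x y * Real.log (cY F y)
        = ∑ a, ∑ b, ∑ y, cABY F a b y * Real.log (cY F y) := by
          refine Finset.sum_congr rfl fun a _ => Finset.sum_congr rfl fun b _ => ?_
          rw [Finset.sum_comm]
          exact Finset.sum_congr rfl fun y _ => by rw [← Finset.sum_mul, hqx a b y]
      _ = ∑ a, ∑ y, ∑ b, cABY F a b y * Real.log (cY F y) :=
          Finset.sum_congr rfl fun a _ => Finset.sum_comm
      _ = ∑ y, ∑ a, ∑ b, cABY F a b y * Real.log (cY F y) := Finset.sum_comm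
      _ = ∑ y, plog (cY F y) := by
          refine Finset.sum_congr rfl fun y _ => ?_
          have hpull : ∑ a, ∑ b, cABY F a b y * Real.log (cY F y)
              = (∑ a, ∑ b, cABY F a b y) * Real.log (cY F y) := by
            rw [Finset.sum_mul]
            exact Finset.sum_congr rfl fun a _ => (Finset.sum_mul _ _ _).symm
          rw [hpull]
          have : (∑ a, ∑ b, cABY F a b y) = cY F y := by
            rw [Finset.sum_comm]; rfl
          rw [this]; rfl
  have e8 : ∑ a, ∑ b, ∑ x, ∑ y, q a b x y * Real.log (cAX F a x)
      = ∑ a, ∑ x, plog (cAX F a x) := by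
    refine Finset.sum_congr rfl fun a _ => ?_
    calc ∑ b, ∑ x, ∑ y, q a b x y * Real.log (cAX F a x)
        = ∑ x, ∑ b, ∑ y, q a b x y * Real.log (cAX F a x) := Finset.sum_comm
      _ = ∑ x, plog (cAX F a x) := by
          refine Finset.sum_congr rfl fun x _ => ?_
          calc ∑ b, ∑ y, q a b x y * Real.log (cAX F a x)
              = ∑ b, cABX F a b x * Real.log (cAX F a x) :=
                Finset.sum_congr rfl fun b _ => by rw [← Finset.sum_mul, hqy a b x]
            _ = (∑ b, cABX F a b x) * Real.log (cAX F a x) := (Finset.sum_mul _ _ _).symm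
            _ = plog (cAX F a x) := rfl
  have e9 : ∑ a, ∑ b, ∑ x, ∑ y, q a b x y * Real.log (cAY F a y)
      = ∑ a, ∑ y, plog (cAY F a y) := by
    refine Finset.sum_congr rfl fun a _ => ?_
    calc ∑ b, ∑ x, ∑ y, q a b x y * Real.log (cAY F a y)
        = ∑ b, ∑ y, cABY F a b y * Real.log (cAY F a y) := by
          refine Finset.sum_congr rfl fun b _ => ?_
          rw [Finset.sum_comm]
          exact Finset.sum_congr rfl fun y _ => by rw [← Finset.sum_mul, hqx a b y]
      _ = ∑ y, ∑ b, cABY F a b y * Real.log (cAY F a y) := Finset.sum_comm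
      _ = ∑ y, plog (cAY F a y) := by
          refine Finset.sum_congr rfl fun y _ => ?_
          rw [← Finset.sum_mul]; rfl
  have e10 : ∑ a, ∑ b, ∑ x, ∑ y, q a b x y * Real.log (cBX F b x)
      = ∑ b, ∑ x, plog (cBX F b x) := by
    calc ∑ a, ∑ b, ∑ x, ∑ y, q a b x y * Real.log (cBX F b x)
        = ∑ b, ∑ a, ∑ x, ∑ y, q a b x y * Real.log (cBX F b x) := Finset.sum_comm
      _ = ∑ b, ∑ x, ∑ a, ∑ y, q a b x y * Real.log (cBX F b x) :=
          Finset.sum_congr rfl fun b _ => Finset.sum_comm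
      _ = ∑ b, ∑ x, plog (cBX F b x) := by
          refine Finset.sum_congr rfl fun b _ => Finset.sum_congr rfl fun x _ => ?_
          calc ∑ a, ∑ y, q a b x y * Real.log (cBX F b x)
              = ∑ a, cABX F a b x * Real.log (cBX F b x) :=
                Finset.sum_congr rfl fun a _ => by rw [← Finset.sum_mul, hqy a b x]
            _ = (∑ a, cABX F a b x) * Real.log (cBX F b x) := (Finset.sum_mul _ _ _).symm
            _ = plog (cBX F b x) := rfl
  have e11 : ∑ a, ∑ b, ∑ x, ∑ y, q a b x y * Real.log (cBY F b y)
      = ∑ b, ∑ y, plog (cBY F b y) := by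
    calc ∑ a, ∑ b, ∑ x, ∑ y, q a b x y * Real.log (cBY F b y)
        = ∑ a, ∑ b, ∑ y, cABY F a b y * Real.log (cBY F b y) := by
          refine Finset.sum_congr rfl fun a _ => Finset.sum_congr rfl fun b _ => ?_
          rw [Finset.sum_comm]
          exact Finset.sum_congr rfl fun y _ => by rw [← Finset.sum_mul, hqx a b y]
      _ = ∑ b, ∑ a, ∑ y, cABY F a b y * Real.log (cBY F b y) := Finset.sum_comm
      _ = ∑ b, ∑ y, ∑ a, cABY F a b y * Real.log (cBY F b y) :=
          Finset.sum_congr rfl fun b _ => Finset.sum_comm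
      _ = ∑ b, ∑ y, plog (cBY F b y) := by
          refine Finset.sum_congr rfl fun b _ => Finset.sum_congr rfl fun y _ => ?_
          rw [← Finset.sum_mul]; rfl
  -- sum the pointwise inequality
  have hsum : ∑ a, ∑ b, ∑ x, ∑ y, (q a b x y - w a b x y)
      ≤ ∑ a, ∑ b, ∑ x, ∑ y,
        (q a b x y * Real.log (cABX F a b x) + q a b x y * Real.log (cABY F a b y)
        - q a b x y * Real.log (cAB F a b)
        + (q a b x y * Real.log (cA F a) + q a b x y * Real.log (cB F b)
           + q a b x y * Real.log (cX F x) + q a b x y * Real.log (cY F y))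
        - (q a b x y * Real.log (cAX F a x) + q a b x y * Real.log (cAY F a y)
           + q a b x y * Real.log (cBX F b x) + q a b x y * Real.log (cBY F b y))) :=
    Finset.sum_le_sum fun a _ => Finset.sum_le_sum fun b _ => Finset.sum_le_sum fun x _ =>
      Finset.sum_le_sum fun y _ => key a b x y
  have hL : (0:ℝ) ≤ ∑ a, ∑ b, ∑ x, ∑ y, (q a b x y - w a b x y) := by
    simp only [Finset.sum_sub_distrib]
    rw [hqtot]
    linarith [hwtot]
  have hR : ∑ a, ∑ b, ∑ x, ∑ y,
        (q a b x y * Real.log (cABX F a b x) + q a b x y * Real.log (cABY F a b y)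
        - q a b x y * Real.log (cAB F a b)
        + (q a b x y * Real.log (cA F a) + q a b x y * Real.log (cB F b)
           + q a b x y * Real.log (cX F x) + q a b x y * Real.log (cY F y))
        - (q a b x y * Real.log (cAX F a x) + q a b x y * Real.log (cAY F a y)
           + q a b x y * Real.log (cBX F b x) + q a b x y * Real.log (cBY F b y)))
      = (∑ a, ∑ b, ∑ x, plog (cABX F a b x)) + (∑ a, ∑ b, ∑ y, plog (cABY F a b y))
        - (∑ a, ∑ b, plog (cAB F a b))
        + ((∑ a, plog (cA F a)) + (∑ b, plog (cB F b)) + (∑ x, plog (cX F x))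
           + (∑ y, plog (cY F y)))
        - ((∑ a, ∑ x, plog (cAX F a x)) + (∑ a, ∑ y, plog (cAY F a y))
           + (∑ b, ∑ x, plog (cBX F b x)) + (∑ b, ∑ y, plog (cBY F b y))) := by
    simp only [Finset.sum_add_distrib, Finset.sum_sub_distrib]
    rw [e1, e2, e3, e4, e5, e6, e7, e8, e9, e10, e11]
  linarith [le_trans hL (hsum.trans (le_of_eq hR))]

/-- Under condition (B) and the pointwise inequality
`p(a,x)p(a,y)p(x,y) ≤ p(a)p(x)p(y)p(a,x,y)`, Ingleton-type inequality
`I(A:B) ≤ I(A:B|X) + I(A:B|Y)` holds. -/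
theorem stmt_9 {Ω α β χ υ : Type*}
    [Fintype Ω] [Fintype α] [Fintype β] [Fintype χ] [Fintype υ]
    (p : Ω → ℝ) (hp : IsPMF p)
    (A : Ω → α) (B : Ω → β) (X : Ω → χ) (Y : Ω → υ)
    (hB : ∀ (a : α) (x : χ) (y : υ),
      0 < pr p {ω | A ω = a ∧ X ω = x} →
      0 < pr p {ω | A ω = a ∧ Y ω = y} →
      0 < pr p {ω | A ω = a ∧ X ω = x ∧ Y ω = y})
    (hineq : ∀ (a : α) (x : χ) (y : υ),
      pr p {ω | A ω = a ∧ X ω = x} * pr p {ω | A ω = a ∧ Y ω = y}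
          * pr p {ω | X ω = x ∧ Y ω = y} ≤
        pr p {ω | A ω = a} * pr p {ω | X ω = x} * pr p {ω | Y ω = y}
          * pr p {ω | A ω = a ∧ X ω = x ∧ Y ω = y}) :
    mi p A B ≤ cmi p A B X + cmi p A B Y := by
  classical
  obtain ⟨hp0, hp1⟩ := hp
  set F : α → β → χ → υ → ℝ :=
    fun a b x y => pr p {ω | A ω = a ∧ B ω = b ∧ X ω = x ∧ Y ω = y} with hF_def
  have hF : ∀ a b x y, 0 ≤ F a b x y := fun a b x y => pr_nonneg' hp0 _
  -- identifications of marginals with pr-probabilities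
  have hcABX : ∀ a b x, cABX F a b x = pr p {ω | A ω = a ∧ B ω = b ∧ X ω = x} := by
    intro a b x
    rw [pr_split' p {ω | A ω = a ∧ B ω = b ∧ X ω = x} Y]
    exact Finset.sum_congr rfl fun y _ => pr_congr' p fun ω => by
      (try simp only [Set.mem_setOf_eq]); (try tauto)
  have hcABY : ∀ a b y, cABY F a b y = pr p {ω | A ω = a ∧ B ω = b ∧ Y ω = y} := by
    intro a b y
    rw [pr_split' p {ω | A ω = a ∧ B ω = b ∧ Y ω = y} X]
    exact Finset.sum_congr rfl fun x _ => pr_congr' p fun ω => by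
      (try simp only [Set.mem_setOf_eq]); (try tauto)
  have hcAB : ∀ a b, cAB F a b = pr p {ω | A ω = a ∧ B ω = b} := by
    intro a b
    rw [pr_split' p {ω | A ω = a ∧ B ω = b} X]
    refine Finset.sum_congr rfl fun x _ => ?_
    rw [hcABX a b x]
    exact pr_congr' p fun ω => by (try simp only [Set.mem_setOf_eq]); (try tauto)
  have hcAXY : ∀ a x y, cAXY F a x y = pr p {ω | A ω = a ∧ X ω = x ∧ Y ω = y} := by
    intro a x y
    rw [pr_split' p {ω | A ω = a ∧ X ω = x ∧ Y ω = y} B]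
    exact Finset.sum_congr rfl fun b _ => pr_congr' p fun ω => by
      (try simp only [Set.mem_setOf_eq]); (try tauto)
  have hcAX : ∀ a x, cAX F a x = pr p {ω | A ω = a ∧ X ω = x} := by
    intro a x
    rw [pr_split' p {ω | A ω = a ∧ X ω = x} B]
    refine Finset.sum_congr rfl fun b _ => ?_
    rw [hcABX a b x]
    exact pr_congr' p fun ω => by (try simp only [Set.mem_setOf_eq]); (try tauto)
  have hcAY : ∀ a y, cAY F a y = pr p {ω | A ω = a ∧ Y ω = y} := by
    intro a y
    rw [pr_split' p {ω | A ω = a ∧ Y ω = y} B]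
    refine Finset.sum_congr rfl fun b _ => ?_
    rw [hcABY a b y]
    exact pr_congr' p fun ω => by (try simp only [Set.mem_setOf_eq]); (try tauto)
  have hcBX : ∀ b x, cBX F b x = pr p {ω | B ω = b ∧ X ω = x} := by
    intro b x
    rw [pr_split' p {ω | B ω = b ∧ X ω = x} A]
    refine Finset.sum_congr rfl fun a _ => ?_
    rw [hcABX a b x]
    exact pr_congr' p fun ω => by (try simp only [Set.mem_setOf_eq]); (try tauto)
  have hcBY : ∀ b y, cBY F b y = pr p {ω | B ω = b ∧ Y ω = y} := by
    intro b y
    rw [pr_split' p {ω | B ω = b ∧ Y ω = y} A]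
    refine Finset.sum_congr rfl fun a _ => ?_
    rw [hcABY a b y]
    exact pr_congr' p fun ω => by (try simp only [Set.mem_setOf_eq]); (try tauto)
  have hcXY : ∀ x y, cXY F x y = pr p {ω | X ω = x ∧ Y ω = y} := by
    intro x y
    rw [pr_split' p {ω | X ω = x ∧ Y ω = y} A]
    refine Finset.sum_congr rfl fun a _ => ?_
    rw [hcAXY a x y]
    exact pr_congr' p fun ω => by (try simp only [Set.mem_setOf_eq]); (try tauto)
  have hcA : ∀ a, cA F a = pr p {ω | A ω = a} := by
    intro a
    rw [pr_split' p {ω | A ω = a} B]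
    refine Finset.sum_congr rfl fun b _ => ?_
    rw [hcAB a b]
    exact pr_congr' p fun ω => by (try simp only [Set.mem_setOf_eq]); (try tauto)
  have hcB : ∀ b, cB F b = pr p {ω | B ω = b} := by
    intro b
    rw [pr_split' p {ω | B ω = b} A]
    refine Finset.sum_congr rfl fun a _ => ?_
    rw [hcAB a b]
    exact pr_congr' p fun ω => by (try simp only [Set.mem_setOf_eq]); (try tauto)
  have hcX : ∀ x, cX F x = pr p {ω | X ω = x} := by
    intro x
    rw [pr_split' p {ω | X ω = x} B]
    refine Finset.sum_congr rfl fun b _ => ?_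
    rw [hcBX b x]
    exact pr_congr' p fun ω => by (try simp only [Set.mem_setOf_eq]); (try tauto)
  have hcY : ∀ y, cY F y = pr p {ω | Y ω = y} := by
    intro y
    rw [pr_split' p {ω | Y ω = y} B]
    refine Finset.sum_congr rfl fun b _ => ?_
    rw [hcBY b y]
    exact pr_congr' p fun ω => by (try simp only [Set.mem_setOf_eq]); (try tauto)
  have htot' : ∑ a, cA F a = 1 := by
    have h1 : pr p Set.univ = ∑ a, pr p {ω | A ω = a} := by
      rw [pr_split' p Set.univ A]
      exact Finset.sum_congr rfl fun a _ => pr_congr' p fun ω => by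
        (try simp only [Set.mem_setOf_eq, Set.mem_univ, true_and]); (try tauto)
    have h2 : pr p Set.univ = 1 := by rw [pr_univ' p, hp1]
    rw [show (∑ a, cA F a) = ∑ a, pr p {ω | A ω = a} from
      Finset.sum_congr rfl fun a _ => hcA a, ← h1, h2]
  -- transfer hypotheses
  have hB' : ∀ a x y, 0 < cAX F a x → 0 < cAY F a y → 0 < cAXY F a x y := by
    intro a x y h1 h2
    rw [hcAXY]
    rw [hcAX] at h1; rw [hcAY] at h2
    have := hB a x y h1 h2
    exact lt_of_lt_of_le this (le_of_eq (pr_congr' p fun ω => by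
      (try simp only [Set.mem_setOf_eq]); (try tauto)))
  have hineq' : ∀ a x y, cAX F a x * cAY F a y * cXY F x y
      ≤ cA F a * cX F x * cY F y * cAXY F a x y := by
    intro a x y
    rw [hcAX, hcAY, hcXY, hcA, hcX, hcY, hcAXY]
    exact hineq a x y
  have hcore := ingleton_core F hF htot' hB' hineq'
  -- rewrite entropies as sums over marginals
  have entA : ent p A = -∑ a, pr p {ω | A ω = a} * Real.logb 2 (pr p {ω | A ω = a}) := rfl
  have entB : ent p B = -∑ b, pr p {ω | B ω = b} * Real.logb 2 (pr p {ω | B ω = b}) := rfl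
  have entX : ent p X = -∑ x, pr p {ω | X ω = x} * Real.logb 2 (pr p {ω | X ω = x}) := rfl
  have entY : ent p Y = -∑ y, pr p {ω | Y ω = y} * Real.logb 2 (pr p {ω | Y ω = y}) := rfl
  have entAB := ent_pair' p A B
  have entAX := ent_pair' p A X
  have entAY := ent_pair' p A Y
  have entBX := ent_pair' p B X
  have entBY := ent_pair' p B Y
  have entABX := ent_triple' p A B X
  have entABY := ent_triple' p A B Y
  -- put everything in terms of the marginal functions
  unfold mi cmi
  rw [entA, entB, entX, entY, entAB, entAX, entAY, entBX, entBY, entABX, entABY]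
  simp only [← hcA, ← hcB, ← hcX, ← hcY, ← hcAB, ← hcAX, ← hcAY, ← hcBX, ← hcBY,
    ← hcABX, ← hcABY]
  -- convert logb to natural log and conclude from the core inequality
  have hlog2 : (0:ℝ) < Real.log 2 := Real.log_pos (by norm_num)
  simp only [Real.logb, ← mul_div_assoc, ← Finset.sum_div]
  have hmono := mul_le_mul_of_nonneg_right hcore (inv_nonneg.mpr hlog2.le)
  simp only [plog] at hmono
  simp only [div_eq_mul_inv]
  ring_nf
  ring_nf at hmono
  linarith [hmono]
end

section
/- Let A, B, X, Y be jointly distributed random variables with finite ranges. If I(X:Y) = 0 and I(X:Y | A) = 0, then I(A:B) ≤ I(A:B | X) + I(A:B | Y). -/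
open Finset

namespace ZYaux
set_option linter.unusedSectionVars false
noncomputable section

open Classical in
def m {Ω γ : Type*} [Fintype Ω] (p : Ω → ℝ) (V : Ω → γ) (v : γ) : ℝ :=
  ∑ ω, if V ω = v then p ω else 0

variable {Ω γ δ : Type*} [Fintype Ω] [Fintype γ] [Fintype δ]

lemma m_nonneg (p : Ω → ℝ) (hp : ∀ ω, 0 ≤ p ω) (V : Ω → γ) (v : γ) : 0 ≤ m p V v := by
  classical
  unfold m
  refine Finset.sum_nonneg fun ω _ => ?_
  split <;> simp [hp ω]

lemma pr_eq (p : Ω → ℝ) (V : Ω → γ) (v : γ) : pr p {ω | V ω = v} = m p V v := by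
  classical
  unfold pr m
  refine Finset.sum_congr rfl fun ω _ => ?_
  rw [Set.indicator_apply]
  simp only [Set.mem_setOf_eq]

lemma ent_eq (p : Ω → ℝ) (V : Ω → γ) :
    ent p V = -∑ v, m p V v * Real.logb 2 (m p V v) := by
  unfold ent
  simp only [pr_eq]

lemma m_congr {p : Ω → ℝ} {V : Ω → γ} {W : Ω → δ} {v : γ} {w : δ}
    (h : ∀ ω, V ω = v ↔ W ω = w) : m p V v = m p W w := by
  classical
  unfold m
  exact Finset.sum_congr rfl fun ω _ => if_congr (h ω) rfl rfl

lemma m_collapse (p : Ω → ℝ) (V : Ω → γ) (W : Ω → δ) (v : γ) :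
    ∑ w, m p (fun ω => (V ω, W ω)) (v, w) = m p V v := by
  classical
  unfold m
  rw [Finset.sum_comm]
  refine Finset.sum_congr rfl fun ω _ => ?_
  by_cases h : V ω = v
  · simp [Prod.ext_iff, h]
  · simp [Prod.ext_iff, h]

lemma m_collapse' (p : Ω → ℝ) (V : Ω → γ) (W : Ω → δ) (w : δ) :
    ∑ v, m p (fun ω => (V ω, W ω)) (v, w) = m p W w := by
  classical
  unfold m
  rw [Finset.sum_comm]
  refine Finset.sum_congr rfl fun ω _ => ?_
  by_cases h : W ω = w
  · simp [Prod.ext_iff, h]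
  · simp [Prod.ext_iff, h]

lemma m_total (p : Ω → ℝ) (V : Ω → γ) : ∑ v, m p V v = ∑ ω, p ω := by
  classical
  unfold m
  rw [Finset.sum_comm]
  refine Finset.sum_congr rfl fun ω _ => ?_
  simp

end

noncomputable section Marginals

variable {Ω α β χ υ : Type*} [Fintype Ω] [Fintype α] [Fintype β] [Fintype χ] [Fintype υ]
variable (p : Ω → ℝ) (A : Ω → α) (B : Ω → β) (X : Ω → χ) (Y : Ω → υ)

def Pa (a : α) : ℝ := m p A a
def Pb (b : β) : ℝ := m p B b
def Px (x : χ) : ℝ := m p X x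
def Py (y : υ) : ℝ := m p Y y
def Pab (a : α) (b : β) : ℝ := m p (fun ω => (A ω, B ω)) (a, b)
def Pax (a : α) (x : χ) : ℝ := m p (fun ω => (A ω, X ω)) (a, x)
def Pay (a : α) (y : υ) : ℝ := m p (fun ω => (A ω, Y ω)) (a, y)
def Pbx (b : β) (x : χ) : ℝ := m p (fun ω => (B ω, X ω)) (b, x)
def Pby (b : β) (y : υ) : ℝ := m p (fun ω => (B ω, Y ω)) (b, y)
def Pxy (x : χ) (y : υ) : ℝ := m p (fun ω => (X ω, Y ω)) (x, y)
def Pabx (a : α) (b : β) (x : χ) : ℝ := m p (fun ω => (A ω, B ω, X ω)) (a, b, x)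
def Paby (a : α) (b : β) (y : υ) : ℝ := m p (fun ω => (A ω, B ω, Y ω)) (a, b, y)
def Paxy (a : α) (x : χ) (y : υ) : ℝ := m p (fun ω => (A ω, X ω, Y ω)) (a, x, y)

lemma sum_Pabx_b (a : α) (x : χ) : ∑ b, Pabx p A B X a b x = Pax p A X a x := by
  have h : ∀ b, Pabx p A B X a b x = m p (fun ω => ((A ω, X ω), B ω)) ((a, x), b) :=
    fun b => m_congr (fun ω => by simp only [Prod.ext_iff]; try tauto)
  simp only [h]
  exact m_collapse p _ B (a, x)

lemma sum_Pabx_a (b : β) (x : χ) : ∑ a, Pabx p A B X a b x = Pbx p B X b x := by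
  have h : ∀ a, Pabx p A B X a b x = m p (fun ω => (A ω, (B ω, X ω))) (a, (b, x)) :=
    fun a => m_congr (fun ω => by simp only [Prod.ext_iff]; try tauto)
  simp only [h]
  exact m_collapse' p A _ (b, x)

lemma sum_Pabx_x (a : α) (b : β) : ∑ x, Pabx p A B X a b x = Pab p A B a b := by
  have h : ∀ x, Pabx p A B X a b x = m p (fun ω => ((A ω, B ω), X ω)) ((a, b), x) :=
    fun x => m_congr (fun ω => by simp only [Prod.ext_iff]; try tauto)
  simp only [h]
  exact m_collapse p _ X (a, b)

lemma sum_Paby_b (a : α) (y : υ) : ∑ b, Paby p A B Y a b y = Pay p A Y a y := by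
  have h : ∀ b, Paby p A B Y a b y = m p (fun ω => ((A ω, Y ω), B ω)) ((a, y), b) :=
    fun b => m_congr (fun ω => by simp only [Prod.ext_iff]; try tauto)
  simp only [h]
  exact m_collapse p _ B (a, y)

lemma sum_Paby_a (b : β) (y : υ) : ∑ a, Paby p A B Y a b y = Pby p B Y b y := by
  have h : ∀ a, Paby p A B Y a b y = m p (fun ω => (A ω, (B ω, Y ω))) (a, (b, y)) :=
    fun a => m_congr (fun ω => by simp only [Prod.ext_iff]; try tauto)
  simp only [h]
  exact m_collapse' p A _ (b, y)

lemma sum_Paby_y (a : α) (b : β) : ∑ y, Paby p A B Y a b y = Pab p A B a b := by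
  have h : ∀ y, Paby p A B Y a b y = m p (fun ω => ((A ω, B ω), Y ω)) ((a, b), y) :=
    fun y => m_congr (fun ω => by simp only [Prod.ext_iff]; try tauto)
  simp only [h]
  exact m_collapse p _ Y (a, b)

lemma sum_Paxy_a (x : χ) (y : υ) : ∑ a, Paxy p A X Y a x y = Pxy p X Y x y := by
  have h : ∀ a, Paxy p A X Y a x y = m p (fun ω => (A ω, (X ω, Y ω))) (a, (x, y)) :=
    fun a => m_congr (fun ω => by simp only [Prod.ext_iff]; try tauto)
  simp only [h]
  exact m_collapse' p A _ (x, y)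

lemma sum_Paxy_y (a : α) (x : χ) : ∑ y, Paxy p A X Y a x y = Pax p A X a x := by
  have h : ∀ y, Paxy p A X Y a x y = m p (fun ω => ((A ω, X ω), Y ω)) ((a, x), y) :=
    fun y => m_congr (fun ω => by simp only [Prod.ext_iff]; try tauto)
  simp only [h]
  exact m_collapse p _ Y (a, x)

lemma sum_Paxy_x (a : α) (y : υ) : ∑ x, Paxy p A X Y a x y = Pay p A Y a y := by
  have h : ∀ x, Paxy p A X Y a x y = m p (fun ω => ((A ω, Y ω), X ω)) ((a, y), x) :=
    fun x => m_congr (fun ω => by simp only [Prod.ext_iff]; try tauto)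
  simp only [h]
  exact m_collapse p _ X (a, y)

lemma sum_Pab_b (a : α) : ∑ b, Pab p A B a b = Pa p A a := m_collapse p A B a
lemma sum_Pab_a (b : β) : ∑ a, Pab p A B a b = Pb p B b := m_collapse' p A B b
lemma sum_Pax_x (a : α) : ∑ x, Pax p A X a x = Pa p A a := m_collapse p A X a
lemma sum_Pax_a (x : χ) : ∑ a, Pax p A X a x = Px p X x := m_collapse' p A X x
lemma sum_Pay_y (a : α) : ∑ y, Pay p A Y a y = Pa p A a := m_collapse p A Y a
lemma sum_Pay_a (y : υ) : ∑ a, Pay p A Y a y = Py p Y y := m_collapse' p A Y y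
lemma sum_Pbx_x (b : β) : ∑ x, Pbx p B X b x = Pb p B b := m_collapse p B X b
lemma sum_Pbx_b (x : χ) : ∑ b, Pbx p B X b x = Px p X x := m_collapse' p B X x
lemma sum_Pby_y (b : β) : ∑ y, Pby p B Y b y = Pb p B b := m_collapse p B Y b
lemma sum_Pby_b (y : υ) : ∑ b, Pby p B Y b y = Py p Y y := m_collapse' p B Y y
lemma sum_Pxy_y (x : χ) : ∑ y, Pxy p X Y x y = Px p X x := m_collapse p X Y x
lemma sum_Pxy_x (y : υ) : ∑ x, Pxy p X Y x y = Py p Y y := m_collapse' p X Y y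

end Marginals

noncomputable section Expand
set_option linter.unusedSectionVars false

lemma triple_reorder {γ δ ε : Type*} [Fintype γ] [Fintype δ] [Fintype ε] (f : γ → δ → ε → ℝ) :
    ∑ x : γ, ∑ y : δ, ∑ a : ε, f x y a = ∑ a, ∑ x, ∑ y, f x y a :=
  calc ∑ x, ∑ y, ∑ a, f x y a
      = ∑ x, ∑ a, ∑ y, f x y a := Finset.sum_congr rfl fun x _ => Finset.sum_comm
    _ = ∑ a, ∑ x, ∑ y, f x y a := Finset.sum_comm

variable {Ω α β χ υ : Type*} [Fintype Ω] [Fintype α] [Fintype β] [Fintype χ] [Fintype υ]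
variable (p : Ω → ℝ) (A : Ω → α) (B : Ω → β) (X : Ω → χ) (Y : Ω → υ)

lemma ent_A : ent p A = -∑ a, Pa p A a * Real.logb 2 (Pa p A a) := by
  rw [ent_eq]; rfl

lemma ent_AB : ent p (fun ω => (A ω, B ω)) =
    -∑ a, ∑ b, Pab p A B a b * Real.logb 2 (Pab p A B a b) := by
  rw [ent_eq, Fintype.sum_prod_type]; rfl

lemma ent_AX : ent p (fun ω => (A ω, X ω)) =
    -∑ a, ∑ x, Pax p A X a x * Real.logb 2 (Pax p A X a x) := by
  rw [ent_eq, Fintype.sum_prod_type]; rfl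

lemma ent_XA : ent p (fun ω => (X ω, A ω)) =
    -∑ a, ∑ x, Pax p A X a x * Real.logb 2 (Pax p A X a x) := by
  rw [ent_eq, Fintype.sum_prod_type, Finset.sum_comm]
  refine congrArg Neg.neg (Finset.sum_congr rfl fun a _ => Finset.sum_congr rfl fun x _ => ?_)
  have h : m p (fun ω => (X ω, A ω)) (x, a) = Pax p A X a x :=
    m_congr (fun ω => by simp only [Prod.ext_iff]; tauto)
  rw [h]

lemma ent_ABX : ent p (fun ω => (A ω, B ω, X ω)) =
    -∑ a, ∑ b, ∑ x, Pabx p A B X a b x * Real.logb 2 (Pabx p A B X a b x) := by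
  rw [ent_eq]
  simp only [Fintype.sum_prod_type]
  rfl

lemma ent_XYA : ent p (fun ω => (X ω, Y ω, A ω)) =
    -∑ a, ∑ x, ∑ y, Paxy p A X Y a x y * Real.logb 2 (Paxy p A X Y a x y) := by
  rw [ent_eq]
  simp only [Fintype.sum_prod_type]
  rw [triple_reorder]
  refine congrArg Neg.neg (Finset.sum_congr rfl fun a _ => Finset.sum_congr rfl fun x _ =>
    Finset.sum_congr rfl fun y _ => ?_)
  have h : m p (fun ω => (X ω, Y ω, A ω)) (x, y, a) = Paxy p A X Y a x y :=
    m_congr (fun ω => by simp only [Prod.ext_iff]; tauto)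
  rw [h]

lemma mi_AB_sum : mi p A B = ∑ a, ∑ b, Pab p A B a b *
    (Real.logb 2 (Pab p A B a b) - Real.logb 2 (Pa p A a) - Real.logb 2 (Pb p B b)) := by
  have dA : (∑ a, ∑ b, Pab p A B a b * Real.logb 2 (Pa p A a))
      = ∑ a, Pa p A a * Real.logb 2 (Pa p A a) := by
    refine Finset.sum_congr rfl fun a _ => ?_
    rw [← Finset.sum_mul, sum_Pab_b]
  have dB : (∑ a, ∑ b, Pab p A B a b * Real.logb 2 (Pb p B b))
      = ∑ b, Pb p B b * Real.logb 2 (Pb p B b) := by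
    rw [Finset.sum_comm]
    refine Finset.sum_congr rfl fun b _ => ?_
    rw [← Finset.sum_mul, sum_Pab_a]
  unfold mi
  rw [ent_A p A, ent_A p B, ent_AB p A B]
  simp only [mul_sub, Finset.sum_sub_distrib]
  rw [dA, dB]
  have hB : ∀ b, Pb p B b = Pa p B b := fun _ => rfl
  simp only [hB]
  ring

lemma cmi_ABX_sum : cmi p A B X = ∑ a, ∑ b, ∑ x, Pabx p A B X a b x *
    (Real.logb 2 (Pabx p A B X a b x) - Real.logb 2 (Pax p A X a x)
      - Real.logb 2 (Pbx p B X b x) + Real.logb 2 (Px p X x)) := by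
  have d1 : (∑ a, ∑ b, ∑ x, Pabx p A B X a b x * Real.logb 2 (Pax p A X a x))
      = ∑ a, ∑ x, Pax p A X a x * Real.logb 2 (Pax p A X a x) := by
    refine Finset.sum_congr rfl fun a _ => ?_
    rw [Finset.sum_comm]
    refine Finset.sum_congr rfl fun x _ => ?_
    rw [← Finset.sum_mul, sum_Pabx_b]
  have d2 : (∑ a, ∑ b, ∑ x, Pabx p A B X a b x * Real.logb 2 (Pbx p B X b x))
      = ∑ b, ∑ x, Pbx p B X b x * Real.logb 2 (Pbx p B X b x) := by
    rw [Finset.sum_comm]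
    refine Finset.sum_congr rfl fun b _ => ?_
    rw [Finset.sum_comm]
    refine Finset.sum_congr rfl fun x _ => ?_
    rw [← Finset.sum_mul, sum_Pabx_a]
  have d3 : (∑ a, ∑ b, ∑ x, Pabx p A B X a b x * Real.logb 2 (Px p X x))
      = ∑ x, Px p X x * Real.logb 2 (Px p X x) := by
    rw [triple_reorder (fun a b x => Pabx p A B X a b x * Real.logb 2 (Px p X x))]
    refine Finset.sum_congr rfl fun x _ => ?_
    have h1 : ∀ a, (∑ b, Pabx p A B X a b x * Real.logb 2 (Px p X x))
        = Pax p A X a x * Real.logb 2 (Px p X x) := by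
      intro a; rw [← Finset.sum_mul, sum_Pabx_b]
    simp only [h1]
    rw [← Finset.sum_mul, sum_Pax_a]
  unfold cmi
  rw [ent_AX p A X, ent_AX p B X, ent_ABX p A B X, ent_A p X]
  simp only [mul_sub, mul_add, Finset.sum_sub_distrib, Finset.sum_add_distrib]
  rw [d1, d2, d3]
  have hB : ∀ b x, Pbx p B X b x = Pax p B X b x := fun _ _ => rfl
  have hX : ∀ x, Px p X x = Pa p X x := fun _ => rfl
  simp only [hB, hX]
  ring

lemma cmi_ABY_sum : cmi p A B Y = ∑ a, ∑ b, ∑ y, Paby p A B Y a b y *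
    (Real.logb 2 (Paby p A B Y a b y) - Real.logb 2 (Pay p A Y a y)
      - Real.logb 2 (Pby p B Y b y) + Real.logb 2 (Py p Y y)) := by
  have d1 : (∑ a, ∑ b, ∑ y, Paby p A B Y a b y * Real.logb 2 (Pay p A Y a y))
      = ∑ a, ∑ y, Pay p A Y a y * Real.logb 2 (Pay p A Y a y) := by
    refine Finset.sum_congr rfl fun a _ => ?_
    rw [Finset.sum_comm]
    refine Finset.sum_congr rfl fun y _ => ?_
    rw [← Finset.sum_mul, sum_Paby_b]
  have d2 : (∑ a, ∑ b, ∑ y, Paby p A B Y a b y * Real.logb 2 (Pby p B Y b y))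
      = ∑ b, ∑ y, Pby p B Y b y * Real.logb 2 (Pby p B Y b y) := by
    rw [Finset.sum_comm]
    refine Finset.sum_congr rfl fun b _ => ?_
    rw [Finset.sum_comm]
    refine Finset.sum_congr rfl fun y _ => ?_
    rw [← Finset.sum_mul, sum_Paby_a]
  have d3 : (∑ a, ∑ b, ∑ y, Paby p A B Y a b y * Real.logb 2 (Py p Y y))
      = ∑ y, Py p Y y * Real.logb 2 (Py p Y y) := by
    rw [triple_reorder (fun a b y => Paby p A B Y a b y * Real.logb 2 (Py p Y y))]
    refine Finset.sum_congr rfl fun y _ => ?_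
    have h1 : ∀ a, (∑ b, Paby p A B Y a b y * Real.logb 2 (Py p Y y))
        = Pay p A Y a y * Real.logb 2 (Py p Y y) := by
      intro a; rw [← Finset.sum_mul, sum_Paby_b]
    simp only [h1]
    rw [← Finset.sum_mul, sum_Pay_a]
  unfold cmi
  rw [ent_AX p A Y, ent_AX p B Y, ent_ABX p A B Y, ent_A p Y]
  simp only [mul_sub, mul_add, Finset.sum_sub_distrib, Finset.sum_add_distrib]
  rw [d1, d2, d3]
  have hB : ∀ b y, Pby p B Y b y = Pax p B Y b y := fun _ _ => rfl
  have hY : ∀ y, Py p Y y = Pa p Y y := fun _ => rfl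
  have hA : ∀ a y, Pay p A Y a y = Pax p A Y a y := fun _ _ => rfl
  have hT : ∀ a b y, Paby p A B Y a b y = Pabx p A B Y a b y := fun _ _ _ => rfl
  simp only [hB, hY, hA, hT]
  ring

lemma mi_XY_sum : mi p X Y = ∑ x, ∑ y, Pxy p X Y x y *
    (Real.logb 2 (Pxy p X Y x y) - Real.logb 2 (Px p X x) - Real.logb 2 (Py p Y y)) := by
  have h := mi_AB_sum p X Y
  exact h

lemma cmi_XYA_sum : cmi p X Y A = ∑ a, ∑ x, ∑ y, Paxy p A X Y a x y *
    (Real.logb 2 (Paxy p A X Y a x y) + Real.logb 2 (Pa p A a)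
      - Real.logb 2 (Pax p A X a x) - Real.logb 2 (Pay p A Y a y)) := by
  have d1 : (∑ a, ∑ x, ∑ y, Paxy p A X Y a x y * Real.logb 2 (Pax p A X a x))
      = ∑ a, ∑ x, Pax p A X a x * Real.logb 2 (Pax p A X a x) := by
    refine Finset.sum_congr rfl fun a _ => Finset.sum_congr rfl fun x _ => ?_
    rw [← Finset.sum_mul, sum_Paxy_y]
  have d2 : (∑ a, ∑ x, ∑ y, Paxy p A X Y a x y * Real.logb 2 (Pay p A Y a y))
      = ∑ a, ∑ y, Pay p A Y a y * Real.logb 2 (Pay p A Y a y) := by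
    refine Finset.sum_congr rfl fun a _ => ?_
    rw [Finset.sum_comm]
    refine Finset.sum_congr rfl fun y _ => ?_
    rw [← Finset.sum_mul, sum_Paxy_x]
  have d3 : (∑ a, ∑ x, ∑ y, Paxy p A X Y a x y * Real.logb 2 (Pa p A a))
      = ∑ a, Pa p A a * Real.logb 2 (Pa p A a) := by
    refine Finset.sum_congr rfl fun a _ => ?_
    have h1 : ∀ x, (∑ y, Paxy p A X Y a x y * Real.logb 2 (Pa p A a))
        = Pax p A X a x * Real.logb 2 (Pa p A a) := by
      intro x; rw [← Finset.sum_mul, sum_Paxy_y]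
    simp only [h1]
    rw [← Finset.sum_mul, sum_Pax_x]
  unfold cmi
  rw [ent_XA p A X, ent_XA p A Y, ent_XYA p A X Y, ent_A p A]
  simp only [mul_sub, mul_add, Finset.sum_sub_distrib, Finset.sum_add_distrib]
  rw [d1, d2, d3]
  have hA : ∀ a y, Pay p A Y a y = Pax p A Y a y := fun _ _ => rfl
  simp only [hA]
  ring

end Expand
/-- natural-log log-sum inequality -/
lemma log_sum_ineq_log {ι : Type*} [Fintype ι] (u v : ι → ℝ)
    (hu : ∀ i, 0 ≤ u i) (hv : ∀ i, 0 ≤ v i) (h0 : ∀ i, v i = 0 → u i = 0) :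
    (∑ i, u i) * (Real.log (∑ i, u i) - Real.log (∑ i, v i)) ≤
      ∑ i, u i * (Real.log (u i) - Real.log (v i)) := by
  classical
  set U := ∑ i, u i with hU
  set V := ∑ i, v i with hV
  have hUnn : 0 ≤ U := Finset.sum_nonneg fun i _ => hu i
  have hVnn : 0 ≤ V := Finset.sum_nonneg fun i _ => hv i
  rcases eq_or_lt_of_le hUnn with hU0 | hUpos
  · have : ∀ i ∈ Finset.univ, u i = 0 := by
      rw [← Finset.sum_eq_zero_iff_of_nonneg (fun i _ => hu i)]
      exact hU0.symm
    have h1 : ∑ i, u i * (Real.log (u i) - Real.log (v i)) = 0 :=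
      Finset.sum_eq_zero fun i hi => by rw [this i hi]; ring
    rw [h1, ← hU0]
    ring_nf
    simp
  · have hVpos : 0 < V := by
      rcases eq_or_lt_of_le hVnn with hV0 | h
      · exfalso
        have hallv : ∀ i ∈ Finset.univ, v i = 0 := by
          rw [← Finset.sum_eq_zero_iff_of_nonneg (fun i _ => hv i)]
          exact hV0.symm
        have : U = 0 := Finset.sum_eq_zero fun i hi => h0 i (hallv i hi)
        exact absurd this (ne_of_gt hUpos)
      · exact h
    have key : ∀ i, u i * (Real.log U - Real.log V) + (u i - v i * (U / V)) ≤
        u i * (Real.log (u i) - Real.log (v i)) := by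
      intro i
      rcases eq_or_lt_of_le (hu i) with hui0 | huipos
      · rw [← hui0]
        have : 0 ≤ v i * (U / V) := mul_nonneg (hv i) (div_nonneg hUnn hVnn)
        nlinarith
      · have hvipos : 0 < v i := by
          rcases eq_or_lt_of_le (hv i) with h' | h'
          · exact absurd (h0 i h'.symm) (ne_of_gt huipos)
          · exact h'
        have ht : 0 < v i * U / (u i * V) := by positivity
        have hlog := Real.log_le_sub_one_of_pos ht
        have hexpand : Real.log (v i * U / (u i * V)) =
            Real.log (v i) + Real.log U - Real.log (u i) - Real.log V := by
          rw [Real.log_div (by positivity) (by positivity),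
            Real.log_mul (ne_of_gt hvipos) (ne_of_gt hUpos),
            Real.log_mul (ne_of_gt huipos) (ne_of_gt hVpos)]
          ring
        rw [hexpand] at hlog
        have h2 : v i * U / (u i * V) - 1 = v i * (U / V) / u i - 1 := by
          field_simp
        rw [h2] at hlog
        have := mul_le_mul_of_nonneg_left hlog (le_of_lt huipos)
        have h3 : u i * (v i * (U / V) / u i - 1) = v i * (U / V) - u i := by
          field_simp
        rw [h3] at this
        nlinarith
    have hsum := Finset.sum_le_sum fun i (_ : i ∈ Finset.univ) => key i
    have hleft : ∑ i, (u i * (Real.log U - Real.log V) + (u i - v i * (U / V))) =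
        U * (Real.log U - Real.log V) + (U - V * (U / V)) := by
      rw [Finset.sum_add_distrib, Finset.sum_sub_distrib, ← Finset.sum_mul, ← Finset.sum_mul]
    rw [hleft] at hsum
    have : V * (U / V) = U := by field_simp
    rw [this] at hsum
    linarith

/-- base-2 log-sum inequality -/
lemma log_sum_ineq {ι : Type*} [Fintype ι] (u v : ι → ℝ)
    (hu : ∀ i, 0 ≤ u i) (hv : ∀ i, 0 ≤ v i) (h0 : ∀ i, v i = 0 → u i = 0) :
    (∑ i, u i) * (Real.logb 2 (∑ i, u i) - Real.logb 2 (∑ i, v i)) ≤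
      ∑ i, u i * (Real.logb 2 (u i) - Real.logb 2 (v i)) := by
  have h := log_sum_ineq_log u v hu hv h0
  have hl2 : (0:ℝ) < Real.log 2 := Real.log_pos (by norm_num)
  unfold Real.logb
  calc (∑ i, u i) * ((Real.log (∑ i, u i))/Real.log 2 - (Real.log (∑ i, v i))/Real.log 2)
      = ((∑ i, u i) * (Real.log (∑ i, u i) - Real.log (∑ i, v i)))/Real.log 2 := by ring
    _ ≤ (∑ i, u i * (Real.log (u i) - Real.log (v i)))/Real.log 2 := by
        gcongr
    _ = ∑ i, u i * (Real.log (u i)/Real.log 2 - Real.log (v i)/Real.log 2) := by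
        rw [Finset.sum_div]
        exact Finset.sum_congr rfl fun i _ => by ring

/-- equality case of Gibbs: if the (natural-log) relative-entropy-like sum vanishes,
the two mass functions agree pointwise. -/
lemma eq_of_relent_zero {ι : Type*} [Fintype ι] (w g : ι → ℝ)
    (hw : ∀ i, 0 ≤ w i) (hg : ∀ i, 0 ≤ g i)
    (hsupp : ∀ i, 0 < w i → 0 < g i)
    (hsw : ∑ i, w i = 1) (hsg : ∑ i, g i = 1)
    (hzero : ∑ i, w i * (Real.log (w i) - Real.log (g i)) = 0) :
    ∀ i, w i = g i := by
  classical
  set d : ι → ℝ := fun i => w i * (Real.log (w i) - Real.log (g i)) - (w i - g i) with hd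
  have hdnn : ∀ i, 0 ≤ d i := by
    intro i
    rcases eq_or_lt_of_le (hw i) with h0 | hpos
    · simp only [hd, ← h0]
      simpa using hg i
    · have hgpos := hsupp i hpos
      have ht : 0 < g i / w i := by positivity
      have hlog := Real.log_le_sub_one_of_pos ht
      rw [Real.log_div (ne_of_gt hgpos) (ne_of_gt hpos)] at hlog
      have := mul_le_mul_of_nonneg_left hlog (le_of_lt hpos)
      have hexp : w i * (g i / w i - 1) = g i - w i := by field_simp
      rw [hexp] at this
      simp only [hd]
      nlinarith
  have hdsum : ∑ i, d i = 0 := by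
    simp only [hd]
    rw [Finset.sum_sub_distrib, hzero, Finset.sum_sub_distrib, hsw, hsg]
    ring
  have hall : ∀ i ∈ Finset.univ, d i = 0 := by
    rw [← Finset.sum_eq_zero_iff_of_nonneg (fun i _ => hdnn i)]
    exact hdsum
  intro i
  have hdi := hall i (Finset.mem_univ i)
  rcases eq_or_lt_of_le (hw i) with h0 | hpos
  · -- w i = 0, then d i = g i = 0
    simp only [hd, ← h0] at hdi
    simp at hdi
    rw [← h0, hdi]
  · have hgpos := hsupp i hpos
    by_contra hne
    have ht : 0 < g i / w i := by positivity
    have htne : g i / w i ≠ 1 := by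
      intro h
      exact hne (by field_simp at h; linarith)
    have hlog := Real.log_lt_sub_one_of_pos ht htne
    rw [Real.log_div (ne_of_gt hgpos) (ne_of_gt hpos)] at hlog
    have := mul_lt_mul_of_pos_left hlog hpos
    have hexp : w i * (g i / w i - 1) = g i - w i := by field_simp
    rw [hexp] at this
    simp only [hd] at hdi
    nlinarith

section Facts
set_option linter.unusedSectionVars false
variable {Ω α χ υ : Type*} [Fintype Ω] [Fintype α] [Fintype χ] [Fintype υ]
variable (p : Ω → ℝ) (A : Ω → α) (X : Ω → χ) (Y : Ω → υ)

lemma term_le {ι : Type*} [Fintype ι] (f : ι → ℝ) (hf : ∀ i, 0 ≤ f i) (i : ι) :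
    f i ≤ ∑ j, f j :=
  Finset.single_le_sum (fun j _ => hf j) (Finset.mem_univ i)

lemma fact1 (hp : IsPMF p) (h1 : mi p X Y = 0) :
    ∀ x y, Pxy p X Y x y = Px p X x * Py p Y y := by
  have hnn := hp.1
  have nnPxy : ∀ x y, 0 ≤ Pxy p X Y x y := fun x y => m_nonneg p hnn _ _
  have nnPx : ∀ x, 0 ≤ Px p X x := fun x => m_nonneg p hnn _ _
  have nnPy : ∀ y, 0 ≤ Py p Y y := fun y => m_nonneg p hnn _ _
  have hle1 : ∀ x y, Pxy p X Y x y ≤ Px p X x := fun x y => by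
    rw [← sum_Pxy_y p X Y x]; exact term_le _ (fun y' => nnPxy x y') y
  have hle2 : ∀ x y, Pxy p X Y x y ≤ Py p Y y := fun x y => by
    rw [← sum_Pxy_x p X Y y]; exact term_le _ (fun x' => nnPxy x' y) x
  have hl2 : (0:ℝ) < Real.log 2 := Real.log_pos (by norm_num)
  have key := eq_of_relent_zero (ι := χ × υ)
    (fun z => Pxy p X Y z.1 z.2) (fun z => Px p X z.1 * Py p Y z.2)
    (fun z => nnPxy z.1 z.2) (fun z => mul_nonneg (nnPx z.1) (nnPy z.2))
    (fun z hz => mul_pos (lt_of_lt_of_le hz (hle1 z.1 z.2)) (lt_of_lt_of_le hz (hle2 z.1 z.2)))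
    ?hsw ?hsg ?hzero
  · exact fun x y => key (x, y)
  case hsw =>
    rw [Fintype.sum_prod_type]
    have : ∀ x, ∑ y, Pxy p X Y x y = Px p X x := fun x => sum_Pxy_y p X Y x
    simp only [this]
    exact (m_total p X).trans hp.2
  case hsg =>
    rw [Fintype.sum_prod_type]
    have : ∀ x, ∑ y, Px p X x * Py p Y y = Px p X x * 1 := by
      intro x
      rw [← Finset.mul_sum, show (∑ y, Py p Y y) = (1:ℝ) from (m_total p Y).trans hp.2]
    simp only [this, mul_one]
    exact (m_total p X).trans hp.2
  case hzero =>
    have hform : ∀ z : χ × υ, Pxy p X Y z.1 z.2 *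
        (Real.log (Pxy p X Y z.1 z.2) - Real.log (Px p X z.1 * Py p Y z.2)) =
        (Pxy p X Y z.1 z.2 * (Real.logb 2 (Pxy p X Y z.1 z.2)
          - Real.logb 2 (Px p X z.1) - Real.logb 2 (Py p Y z.2))) * Real.log 2 := by
      rintro ⟨x, y⟩
      rcases eq_or_lt_of_le (nnPxy x y) with h0 | hpos
      · rw [← h0]; ring
      · have hx : 0 < Px p X x := lt_of_lt_of_le hpos (hle1 x y)
        have hy : 0 < Py p Y y := lt_of_lt_of_le hpos (hle2 x y)
        rw [Real.log_mul (ne_of_gt hx) (ne_of_gt hy)]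
        have hrw : Real.logb 2 (Pxy p X Y x y) - Real.logb 2 (Px p X x) - Real.logb 2 (Py p Y y)
            = (Real.log (Pxy p X Y x y) - Real.log (Px p X x) - Real.log (Py p Y y)) / Real.log 2 := by
          unfold Real.logb; ring
        rw [hrw, mul_assoc, div_mul_cancel₀ _ (ne_of_gt hl2)]
        ring
    rw [Finset.sum_congr rfl fun z _ => hform z, ← Finset.sum_mul]
    have : (∑ z : χ × υ, Pxy p X Y z.1 z.2 * (Real.logb 2 (Pxy p X Y z.1 z.2)
        - Real.logb 2 (Px p X z.1) - Real.logb 2 (Py p Y z.2))) = mi p X Y := by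
      rw [mi_XY_sum p X Y, Fintype.sum_prod_type]
    rw [this, h1, zero_mul]

end Facts

section Facts2
set_option linter.unusedSectionVars false
variable {Ω α χ υ : Type*} [Fintype Ω] [Fintype α] [Fintype χ] [Fintype υ]
variable (p : Ω → ℝ) (A : Ω → α) (X : Ω → χ) (Y : Ω → υ)

lemma fact2 (hp : IsPMF p) (h2 : cmi p X Y A = 0) :
    ∀ a x y, Paxy p A X Y a x y = Pax p A X a x * Pay p A Y a y / Pa p A a := by
  have hnn := hp.1
  have nnJ : ∀ a x y, 0 ≤ Paxy p A X Y a x y := fun a x y => m_nonneg p hnn _ _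
  have nnPax : ∀ a x, 0 ≤ Pax p A X a x := fun a x => m_nonneg p hnn _ _
  have nnPay : ∀ a y, 0 ≤ Pay p A Y a y := fun a y => m_nonneg p hnn _ _
  have nnPa : ∀ a, 0 ≤ Pa p A a := fun a => m_nonneg p hnn _ _
  have hle1 : ∀ a x y, Paxy p A X Y a x y ≤ Pax p A X a x := fun a x y => by
    rw [← sum_Paxy_y p A X Y a x]; exact term_le _ (fun y' => nnJ a x y') y
  have hle2 : ∀ a x y, Paxy p A X Y a x y ≤ Pay p A Y a y := fun a x y => by
    rw [← sum_Paxy_x p A X Y a y]; exact term_le _ (fun x' => nnJ a x' y) x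
  have hle3 : ∀ a x, Pax p A X a x ≤ Pa p A a := fun a x => by
    rw [← sum_Pax_x p A X a]; exact term_le _ (fun x' => nnPax a x') x
  have hl2 : (0:ℝ) < Real.log 2 := Real.log_pos (by norm_num)
  have key := eq_of_relent_zero (ι := α × χ × υ)
    (fun z => Paxy p A X Y z.1 z.2.1 z.2.2)
    (fun z => Pax p A X z.1 z.2.1 * Pay p A Y z.1 z.2.2 / Pa p A z.1)
    (fun z => nnJ z.1 z.2.1 z.2.2)
    (fun z => div_nonneg (mul_nonneg (nnPax z.1 z.2.1) (nnPay z.1 z.2.2)) (nnPa z.1))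
    ?hsupp ?hsw ?hsg ?hzero
  · exact fun a x y => key (a, x, y)
  case hsupp =>
    rintro ⟨a, x, y⟩ hz
    have h1 : 0 < Pax p A X a x := lt_of_lt_of_le hz (hle1 a x y)
    have h2' : 0 < Pay p A Y a y := lt_of_lt_of_le hz (hle2 a x y)
    have h3 : 0 < Pa p A a := lt_of_lt_of_le h1 (hle3 a x)
    exact div_pos (mul_pos h1 h2') h3
  case hsw =>
    rw [Fintype.sum_prod_type]
    have e1 : ∀ a, (∑ z : χ × υ, Paxy p A X Y a z.1 z.2) = Pa p A a := by
      intro a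
      rw [Fintype.sum_prod_type]
      have : ∀ x, ∑ y, Paxy p A X Y a x y = Pax p A X a x := fun x => sum_Paxy_y p A X Y a x
      simp only [this]
      exact sum_Pax_x p A X a
    simp only [e1]
    exact (m_total p A).trans hp.2
  case hsg =>
    rw [Fintype.sum_prod_type]
    have e1 : ∀ a, (∑ z : χ × υ, Pax p A X a z.1 * Pay p A Y a z.2 / Pa p A a) = Pa p A a := by
      intro a
      rw [Fintype.sum_prod_type]
      have h1 : ∀ x, (∑ y, Pax p A X a x * Pay p A Y a y / Pa p A a)
          = Pax p A X a x * (Pa p A a / Pa p A a) := by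
        intro x
        have : ∀ y, Pax p A X a x * Pay p A Y a y / Pa p A a
            = Pax p A X a x * (Pay p A Y a y / Pa p A a) := fun y => by ring
        simp only [this]
        rw [← Finset.mul_sum, ← Finset.sum_div, sum_Pay_y]
      simp only [h1]
      rw [← Finset.sum_mul, sum_Pax_x]
      rcases eq_or_lt_of_le (nnPa a) with h0 | hpos
      · rw [← h0]; simp
      · rw [div_self (ne_of_gt hpos), mul_one]
    simp only [e1]
    exact (m_total p A).trans hp.2
  case hzero =>
    have hform : ∀ z : α × χ × υ, Paxy p A X Y z.1 z.2.1 z.2.2 *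
        (Real.log (Paxy p A X Y z.1 z.2.1 z.2.2)
          - Real.log (Pax p A X z.1 z.2.1 * Pay p A Y z.1 z.2.2 / Pa p A z.1)) =
        (Paxy p A X Y z.1 z.2.1 z.2.2 * (Real.logb 2 (Paxy p A X Y z.1 z.2.1 z.2.2)
          + Real.logb 2 (Pa p A z.1) - Real.logb 2 (Pax p A X z.1 z.2.1)
          - Real.logb 2 (Pay p A Y z.1 z.2.2))) * Real.log 2 := by
      rintro ⟨a, x, y⟩
      rcases eq_or_lt_of_le (nnJ a x y) with h0 | hpos
      · rw [← h0]; ring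
      · have h1 : 0 < Pax p A X a x := lt_of_lt_of_le hpos (hle1 a x y)
        have h2' : 0 < Pay p A Y a y := lt_of_lt_of_le hpos (hle2 a x y)
        have h3 : 0 < Pa p A a := lt_of_lt_of_le h1 (hle3 a x)
        rw [Real.log_div (ne_of_gt (mul_pos h1 h2')) (ne_of_gt h3),
          Real.log_mul (ne_of_gt h1) (ne_of_gt h2')]
        have hrw : Real.logb 2 (Paxy p A X Y a x y) + Real.logb 2 (Pa p A a)
            - Real.logb 2 (Pax p A X a x) - Real.logb 2 (Pay p A Y a y)
            = (Real.log (Paxy p A X Y a x y) + Real.log (Pa p A a)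
              - Real.log (Pax p A X a x) - Real.log (Pay p A Y a y)) / Real.log 2 := by
          unfold Real.logb; ring
        rw [hrw, mul_assoc, div_mul_cancel₀ _ (ne_of_gt hl2)]
        ring
    rw [Finset.sum_congr rfl fun z _ => hform z, ← Finset.sum_mul]
    have : (∑ z : α × χ × υ, Paxy p A X Y z.1 z.2.1 z.2.2 *
        (Real.logb 2 (Paxy p A X Y z.1 z.2.1 z.2.2) + Real.logb 2 (Pa p A z.1)
          - Real.logb 2 (Pax p A X z.1 z.2.1) - Real.logb 2 (Pay p A Y z.1 z.2.2)))
        = cmi p X Y A := by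
      rw [cmi_XYA_sum p A X Y, Fintype.sum_prod_type]
      exact Finset.sum_congr rfl fun a _ => by rw [Fintype.sum_prod_type]
    rw [this, h2, zero_mul]

end Facts2

noncomputable section Main
set_option linter.unusedSectionVars false
variable {Ω α β χ υ : Type*} [Fintype Ω] [Fintype α] [Fintype β] [Fintype χ] [Fintype υ]
variable (p : Ω → ℝ) (A : Ω → α) (B : Ω → β) (X : Ω → χ) (Y : Ω → υ)

def fX (a : α) (b : β) (x : χ) : ℝ :=
  Pax p A X a x * Pbx p B X b x / (Pa p A a * Px p X x)
def FX (a : α) (b : β) : ℝ := ∑ x, fX p A B X a b x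
def gY (a : α) (b : β) (y : υ) : ℝ :=
  Pay p A Y a y * Pby p B Y b y / (Pb p B b * Py p Y y)
def GY (a : α) (b : β) : ℝ := ∑ y, gY p A B Y a b y

theorem main (hp : IsPMF p) (h1 : mi p X Y = 0) (h2 : cmi p X Y A = 0) :
    mi p A B ≤ cmi p A B X + cmi p A B Y := by
  have hnn := hp.1
  -- nonneg of all marginals
  have nnJx : ∀ a b x, 0 ≤ Pabx p A B X a b x := fun a b x => m_nonneg p hnn _ _
  have nnJy : ∀ a b y, 0 ≤ Paby p A B Y a b y := fun a b y => m_nonneg p hnn _ _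
  have nnPab : ∀ a b, 0 ≤ Pab p A B a b := fun a b => m_nonneg p hnn _ _
  have nnPax : ∀ a x, 0 ≤ Pax p A X a x := fun a x => m_nonneg p hnn _ _
  have nnPay : ∀ a y, 0 ≤ Pay p A Y a y := fun a y => m_nonneg p hnn _ _
  have nnPbx : ∀ b x, 0 ≤ Pbx p B X b x := fun b x => m_nonneg p hnn _ _
  have nnPby : ∀ b y, 0 ≤ Pby p B Y b y := fun b y => m_nonneg p hnn _ _
  have nnPxy : ∀ x y, 0 ≤ Pxy p X Y x y := fun x y => m_nonneg p hnn _ _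
  have nnPaxy : ∀ a x y, 0 ≤ Paxy p A X Y a x y := fun a x y => m_nonneg p hnn _ _
  have nnPa : ∀ a, 0 ≤ Pa p A a := fun a => m_nonneg p hnn _ _
  have nnPb : ∀ b, 0 ≤ Pb p B b := fun b => m_nonneg p hnn _ _
  have nnPx : ∀ x, 0 ≤ Px p X x := fun x => m_nonneg p hnn _ _
  have nnPy : ∀ y, 0 ≤ Py p Y y := fun y => m_nonneg p hnn _ _
  -- monotonicity
  have leJxPax : ∀ a b x, Pabx p A B X a b x ≤ Pax p A X a x := fun a b x => by
    rw [← sum_Pabx_b p A B X a x]; exact term_le _ (fun b' => nnJx a b' x) b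
  have leJxPbx : ∀ a b x, Pabx p A B X a b x ≤ Pbx p B X b x := fun a b x => by
    rw [← sum_Pabx_a p A B X b x]; exact term_le _ (fun a' => nnJx a' b x) a
  have leJyPay : ∀ a b y, Paby p A B Y a b y ≤ Pay p A Y a y := fun a b y => by
    rw [← sum_Paby_b p A B Y a y]; exact term_le _ (fun b' => nnJy a b' y) b
  have leJyPby : ∀ a b y, Paby p A B Y a b y ≤ Pby p B Y b y := fun a b y => by
    rw [← sum_Paby_a p A B Y b y]; exact term_le _ (fun a' => nnJy a' b y) a
  have lePaxPa : ∀ a x, Pax p A X a x ≤ Pa p A a := fun a x => by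
    rw [← sum_Pax_x p A X a]; exact term_le _ (fun x' => nnPax a x') x
  have lePaxPx : ∀ a x, Pax p A X a x ≤ Px p X x := fun a x => by
    rw [← sum_Pax_a p A X x]; exact term_le _ (fun a' => nnPax a' x) a
  have lePayPa : ∀ a y, Pay p A Y a y ≤ Pa p A a := fun a y => by
    rw [← sum_Pay_y p A Y a]; exact term_le _ (fun y' => nnPay a y') y
  have lePayPy : ∀ a y, Pay p A Y a y ≤ Py p Y y := fun a y => by
    rw [← sum_Pay_a p A Y y]; exact term_le _ (fun a' => nnPay a' y) a
  have lePbxPb : ∀ b x, Pbx p B X b x ≤ Pb p B b := fun b x => by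
    rw [← sum_Pbx_x p B X b]; exact term_le _ (fun x' => nnPbx b x') x
  have lePbxPx : ∀ b x, Pbx p B X b x ≤ Px p X x := fun b x => by
    rw [← sum_Pbx_b p B X x]; exact term_le _ (fun b' => nnPbx b' x) b
  have lePbyPb : ∀ b y, Pby p B Y b y ≤ Pb p B b := fun b y => by
    rw [← sum_Pby_y p B Y b]; exact term_le _ (fun y' => nnPby b y') y
  have lePbyPy : ∀ b y, Pby p B Y b y ≤ Py p Y y := fun b y => by
    rw [← sum_Pby_b p B Y y]; exact term_le _ (fun b' => nnPby b' y) b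
  -- facts from the two conditions
  have f1 := fact1 p X Y hp h1
  have f2 := fact2 p A X Y hp h2
  -- nonneg of f, g
  have nnf : ∀ a b x, 0 ≤ fX p A B X a b x := fun a b x =>
    div_nonneg (mul_nonneg (nnPax a x) (nnPbx b x)) (mul_nonneg (nnPa a) (nnPx x))
  have nng : ∀ a b y, 0 ≤ gY p A B Y a b y := fun a b y =>
    div_nonneg (mul_nonneg (nnPay a y) (nnPby b y)) (mul_nonneg (nnPb b) (nnPy y))
  -- positivity transfer
  have posf : ∀ a b x, 0 < Pabx p A B X a b x → 0 < fX p A B X a b x := by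
    intro a b x h
    have h1' : 0 < Pax p A X a x := lt_of_lt_of_le h (leJxPax a b x)
    have h2' : 0 < Pbx p B X b x := lt_of_lt_of_le h (leJxPbx a b x)
    have h3' : 0 < Pa p A a := lt_of_lt_of_le h1' (lePaxPa a x)
    have h4' : 0 < Px p X x := lt_of_lt_of_le h1' (lePaxPx a x)
    exact div_pos (mul_pos h1' h2') (mul_pos h3' h4')
  have posg : ∀ a b y, 0 < Paby p A B Y a b y → 0 < gY p A B Y a b y := by
    intro a b y h
    have h1' : 0 < Pay p A Y a y := lt_of_lt_of_le h (leJyPay a b y)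
    have h2' : 0 < Pby p B Y b y := lt_of_lt_of_le h (leJyPby a b y)
    have h3' : 0 < Pb p B b := lt_of_lt_of_le h2' (lePbyPb b y)
    have h4' : 0 < Py p Y y := lt_of_lt_of_le h2' (lePbyPy b y)
    exact div_pos (mul_pos h1' h2') (mul_pos h3' h4')
  have posF : ∀ a b, 0 < Pab p A B a b → 0 < FX p A B X a b := by
    intro a b h
    have hs : (∑ _x : χ, (0:ℝ)) < ∑ x, Pabx p A B X a b x := by
      rw [sum_Pabx_x]; simpa using h
    obtain ⟨x, -, hx⟩ := Finset.exists_lt_of_sum_lt hs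
    calc (0:ℝ) < fX p A B X a b x := posf a b x hx
      _ ≤ FX p A B X a b := term_le _ (nnf a b) x
  have posG : ∀ a b, 0 < Pab p A B a b → 0 < GY p A B Y a b := by
    intro a b h
    have hs : (∑ _y : υ, (0:ℝ)) < ∑ y, Paby p A B Y a b y := by
      rw [sum_Paby_y]; simpa using h
    obtain ⟨y, -, hy⟩ := Finset.exists_lt_of_sum_lt hs
    calc (0:ℝ) < gY p A B Y a b y := posg a b y hy
      _ ≤ GY p A B Y a b := term_le _ (nng a b) y
  -- pointwise product identity for f*g
  have hpoint : ∀ a b x y, fX p A B X a b x * gY p A B Y a b y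
      = Paxy p A X Y a x y * (Pbx p B X b x * Pby p B Y b y / (Pxy p X Y x y * Pb p B b)) := by
    intro a b x y
    rw [f2 a x y, f1 x y]
    unfold fX gY
    by_cases hPa : Pa p A a = 0
    · have hPax : Pax p A X a x = 0 :=
        le_antisymm (hPa ▸ lePaxPa a x) (nnPax a x)
      simp [hPax, hPa]
    by_cases hPx : Px p X x = 0
    · have hPax : Pax p A X a x = 0 :=
        le_antisymm (hPx ▸ lePaxPx a x) (nnPax a x)
      simp [hPax, hPx]
    by_cases hPb : Pb p B b = 0
    · have hPby : Pby p B Y b y = 0 :=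
        le_antisymm (hPb ▸ lePbyPb b y) (nnPby b y)
      simp [hPby, hPb]
    by_cases hPy : Py p Y y = 0
    · have hPay : Pay p A Y a y = 0 :=
        le_antisymm (hPy ▸ lePayPy a y) (nnPay a y)
      simp [hPay, hPy]
    field_simp
  -- the key normalization: sum of F*G equals 1
  have hSFG : ∑ a, ∑ b, FX p A B X a b * GY p A B Y a b = 1 := by
    have e1 : ∀ a b, FX p A B X a b * GY p A B Y a b
        = ∑ x, ∑ y, fX p A B X a b x * gY p A B Y a b y := fun a b =>
      Finset.sum_mul_sum _ _ _ _
    have e2 : ∀ b x y, Pxy p X Y x y *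
        (Pbx p B X b x * Pby p B Y b y / (Pxy p X Y x y * Pb p B b))
        = Pbx p B X b x * (Pby p B Y b y / Pb p B b) := by
      intro b x y
      by_cases hxy : Pxy p X Y x y = 0
      · rw [hxy, zero_mul]
        have h0 : Px p X x * Py p Y y = 0 := by rw [← f1 x y]; exact hxy
        rcases mul_eq_zero.mp h0 with h | h
        · have : Pbx p B X b x = 0 := le_antisymm (h ▸ lePbxPx b x) (nnPbx b x)
          simp [this]
        · have : Pby p B Y b y = 0 := le_antisymm (h ▸ lePbyPy b y) (nnPby b y)
          simp [this]
      · by_cases hPb : Pb p B b = 0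
        · have : Pby p B Y b y = 0 := le_antisymm (hPb ▸ lePbyPb b y) (nnPby b y)
          simp [this]
        · field_simp
          try ring
    calc ∑ a, ∑ b, FX p A B X a b * GY p A B Y a b
        = ∑ a, ∑ b, ∑ x, ∑ y, fX p A B X a b x * gY p A B Y a b y := by
          simp only [e1]
      _ = ∑ b, ∑ a, ∑ x, ∑ y, fX p A B X a b x * gY p A B Y a b y :=
          Finset.sum_comm
      _ = ∑ b, ∑ x, ∑ y, ∑ a, fX p A B X a b x * gY p A B Y a b y :=
          Finset.sum_congr rfl fun b _ =>
            (triple_reorder (fun x y a => fX p A B X a b x * gY p A B Y a b y)).symm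
      _ = ∑ b, ∑ x, ∑ y, Pbx p B X b x * (Pby p B Y b y / Pb p B b) := by
          refine Finset.sum_congr rfl fun b _ => Finset.sum_congr rfl fun x _ =>
            Finset.sum_congr rfl fun y _ => ?_
          rw [Finset.sum_congr rfl fun a _ => hpoint a b x y, ← Finset.sum_mul,
            sum_Paxy_a, e2]
      _ = ∑ b, ∑ x, Pbx p B X b x * (Pb p B b / Pb p B b) := by
          refine Finset.sum_congr rfl fun b _ => Finset.sum_congr rfl fun x _ => ?_
          rw [← Finset.mul_sum, ← Finset.sum_div, sum_Pby_y]
      _ = ∑ b, Pb p B b * (Pb p B b / Pb p B b) := by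
          refine Finset.sum_congr rfl fun b _ => ?_
          rw [← Finset.sum_mul, sum_Pbx_x]
      _ = ∑ b, Pb p B b := by
          refine Finset.sum_congr rfl fun b _ => ?_
          by_cases h : Pb p B b = 0
          · simp [h]
          · rw [div_self h, mul_one]
      _ = 1 := (m_total p B).trans hp.2
  -- Step 1: log-sum inequality in x, for each (a,b)
  have hI1 : (∑ a, ∑ b, Pab p A B a b *
        (Real.logb 2 (Pab p A B a b) - Real.logb 2 (FX p A B X a b)))
      ≤ cmi p A B X + ∑ a, Pa p A a * Real.logb 2 (Pa p A a) := by
    have step : ∀ a b, Pab p A B a b *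
        (Real.logb 2 (Pab p A B a b) - Real.logb 2 (FX p A B X a b))
        ≤ ∑ x, Pabx p A B X a b x *
          (Real.logb 2 (Pabx p A B X a b x) - Real.logb 2 (fX p A B X a b x)) := by
      intro a b
      have h := log_sum_ineq (fun x => Pabx p A B X a b x) (fun x => fX p A B X a b x)
        (nnJx a b) (nnf a b)
        (fun x hfx => by
          by_contra hne
          have hpos : 0 < Pabx p A B X a b x := lt_of_le_of_ne (nnJx a b x) (Ne.symm hne)
          exact absurd hfx (ne_of_gt (posf a b x hpos)))
      rw [sum_Pabx_x] at h
      exact h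
    calc (∑ a, ∑ b, Pab p A B a b *
          (Real.logb 2 (Pab p A B a b) - Real.logb 2 (FX p A B X a b)))
        ≤ ∑ a, ∑ b, ∑ x, Pabx p A B X a b x *
            (Real.logb 2 (Pabx p A B X a b x) - Real.logb 2 (fX p A B X a b x)) :=
          Finset.sum_le_sum fun a _ => Finset.sum_le_sum fun b _ => step a b
      _ = cmi p A B X + ∑ a, Pa p A a * Real.logb 2 (Pa p A a) := by
          have pw : ∀ a b x, Pabx p A B X a b x *
              (Real.logb 2 (Pabx p A B X a b x) - Real.logb 2 (fX p A B X a b x))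
              = Pabx p A B X a b x * (Real.logb 2 (Pabx p A B X a b x)
                - Real.logb 2 (Pax p A X a x) - Real.logb 2 (Pbx p B X b x)
                + Real.logb 2 (Px p X x))
                + Pabx p A B X a b x * Real.logb 2 (Pa p A a) := by
            intro a b x
            by_cases h : Pabx p A B X a b x = 0
            · rw [h]; ring
            · have hpos : 0 < Pabx p A B X a b x := lt_of_le_of_ne (nnJx a b x) (Ne.symm h)
              have h1' : 0 < Pax p A X a x := lt_of_lt_of_le hpos (leJxPax a b x)
              have h2' : 0 < Pbx p B X b x := lt_of_lt_of_le hpos (leJxPbx a b x)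
              have h3' : 0 < Pa p A a := lt_of_lt_of_le h1' (lePaxPa a x)
              have h4' : 0 < Px p X x := lt_of_lt_of_le h1' (lePaxPx a x)
              unfold fX
              rw [Real.logb_div (ne_of_gt (mul_pos h1' h2')) (ne_of_gt (mul_pos h3' h4')),
                Real.logb_mul (ne_of_gt h1') (ne_of_gt h2'),
                Real.logb_mul (ne_of_gt h3') (ne_of_gt h4')]
              ring
          simp only [pw, Finset.sum_add_distrib]
          rw [← cmi_ABX_sum p A B X]
          congr 1
          refine Finset.sum_congr rfl fun a _ => ?_
          have e3 : ∀ b, (∑ x, Pabx p A B X a b x * Real.logb 2 (Pa p A a))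
              = Pab p A B a b * Real.logb 2 (Pa p A a) := by
            intro b
            rw [← Finset.sum_mul, sum_Pabx_x]
          simp only [e3]
          rw [← Finset.sum_mul, sum_Pab_b]
  -- Step 2: same in y
  have hI2 : (∑ a, ∑ b, Pab p A B a b *
        (Real.logb 2 (Pab p A B a b) - Real.logb 2 (GY p A B Y a b)))
      ≤ cmi p A B Y + ∑ b, Pb p B b * Real.logb 2 (Pb p B b) := by
    have step : ∀ a b, Pab p A B a b *
        (Real.logb 2 (Pab p A B a b) - Real.logb 2 (GY p A B Y a b))
        ≤ ∑ y, Paby p A B Y a b y *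
          (Real.logb 2 (Paby p A B Y a b y) - Real.logb 2 (gY p A B Y a b y)) := by
      intro a b
      have h := log_sum_ineq (fun y => Paby p A B Y a b y) (fun y => gY p A B Y a b y)
        (nnJy a b) (nng a b)
        (fun y hgy => by
          by_contra hne
          have hpos : 0 < Paby p A B Y a b y := lt_of_le_of_ne (nnJy a b y) (Ne.symm hne)
          exact absurd hgy (ne_of_gt (posg a b y hpos)))
      rw [sum_Paby_y] at h
      exact h
    calc (∑ a, ∑ b, Pab p A B a b *
          (Real.logb 2 (Pab p A B a b) - Real.logb 2 (GY p A B Y a b)))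
        ≤ ∑ a, ∑ b, ∑ y, Paby p A B Y a b y *
            (Real.logb 2 (Paby p A B Y a b y) - Real.logb 2 (gY p A B Y a b y)) :=
          Finset.sum_le_sum fun a _ => Finset.sum_le_sum fun b _ => step a b
      _ = cmi p A B Y + ∑ b, Pb p B b * Real.logb 2 (Pb p B b) := by
          have pw : ∀ a b y, Paby p A B Y a b y *
              (Real.logb 2 (Paby p A B Y a b y) - Real.logb 2 (gY p A B Y a b y))
              = Paby p A B Y a b y * (Real.logb 2 (Paby p A B Y a b y)
                - Real.logb 2 (Pay p A Y a y) - Real.logb 2 (Pby p B Y b y)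
                + Real.logb 2 (Py p Y y))
                + Paby p A B Y a b y * Real.logb 2 (Pb p B b) := by
            intro a b y
            by_cases h : Paby p A B Y a b y = 0
            · rw [h]; ring
            · have hpos : 0 < Paby p A B Y a b y := lt_of_le_of_ne (nnJy a b y) (Ne.symm h)
              have h1' : 0 < Pay p A Y a y := lt_of_lt_of_le hpos (leJyPay a b y)
              have h2' : 0 < Pby p B Y b y := lt_of_lt_of_le hpos (leJyPby a b y)
              have h3' : 0 < Pb p B b := lt_of_lt_of_le h2' (lePbyPb b y)
              have h4' : 0 < Py p Y y := lt_of_lt_of_le h2' (lePbyPy b y)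
              unfold gY
              rw [Real.logb_div (ne_of_gt (mul_pos h1' h2')) (ne_of_gt (mul_pos h3' h4')),
                Real.logb_mul (ne_of_gt h1') (ne_of_gt h2'),
                Real.logb_mul (ne_of_gt h3') (ne_of_gt h4')]
              ring
          simp only [pw, Finset.sum_add_distrib]
          rw [← cmi_ABY_sum p A B Y]
          congr 1
          rw [Finset.sum_comm]
          refine Finset.sum_congr rfl fun b _ => ?_
          have e3 : ∀ a, (∑ y, Paby p A B Y a b y * Real.logb 2 (Pb p B b))
              = Pab p A B a b * Real.logb 2 (Pb p B b) := by
            intro a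
            rw [← Finset.sum_mul, sum_Paby_y]
          simp only [e3]
          rw [← Finset.sum_mul, sum_Pab_a]
  -- Step 3: final log-sum over (a,b)
  have hI3 : (0:ℝ) ≤ ∑ a, ∑ b, Pab p A B a b *
      (Real.logb 2 (Pab p A B a b) - Real.logb 2 (FX p A B X a b * GY p A B Y a b)) := by
    have h := log_sum_ineq (ι := α × β) (fun z => Pab p A B z.1 z.2)
      (fun z => FX p A B X z.1 z.2 * GY p A B Y z.1 z.2)
      (fun z => nnPab z.1 z.2)
      (fun z => mul_nonneg (Finset.sum_nonneg fun x _ => nnf z.1 z.2 x)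
        (Finset.sum_nonneg fun y _ => nng z.1 z.2 y))
      (fun z hz => by
        by_contra hne
        have hpos : 0 < Pab p A B z.1 z.2 := lt_of_le_of_ne (nnPab z.1 z.2) (Ne.symm hne)
        exact absurd hz (ne_of_gt (mul_pos (posF z.1 z.2 hpos) (posG z.1 z.2 hpos))))
    have hu : (∑ z : α × β, Pab p A B z.1 z.2) = 1 := by
      rw [Fintype.sum_prod_type]
      have : ∀ a, ∑ b, Pab p A B a b = Pa p A a := fun a => sum_Pab_b p A B a
      simp only [this]
      exact (m_total p A).trans hp.2
    have hv : (∑ z : α × β, FX p A B X z.1 z.2 * GY p A B Y z.1 z.2) = 1 := by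
      rw [Fintype.sum_prod_type]
      exact hSFG
    rw [hu, hv, Real.logb_one] at h
    simp only [sub_zero, one_mul, mul_zero] at h
    calc (0:ℝ) = 0 * 0 := by ring
      _ ≤ ∑ z : α × β, Pab p A B z.1 z.2 * (Real.logb 2 (Pab p A B z.1 z.2)
          - Real.logb 2 (FX p A B X z.1 z.2 * GY p A B Y z.1 z.2)) := by
          simpa using h
      _ = ∑ a, ∑ b, Pab p A B a b * (Real.logb 2 (Pab p A B a b)
          - Real.logb 2 (FX p A B X a b * GY p A B Y a b)) := Fintype.sum_prod_type _
  -- splitting identity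
  have hSplit : (∑ a, ∑ b, Pab p A B a b *
      (Real.logb 2 (Pab p A B a b) - Real.logb 2 (FX p A B X a b * GY p A B Y a b)))
      = (∑ a, ∑ b, Pab p A B a b *
          (Real.logb 2 (Pab p A B a b) - Real.logb 2 (FX p A B X a b)))
        + (∑ a, ∑ b, Pab p A B a b *
          (Real.logb 2 (Pab p A B a b) - Real.logb 2 (GY p A B Y a b)))
        - ∑ a, ∑ b, Pab p A B a b * Real.logb 2 (Pab p A B a b) := by
    have pw : ∀ a b, Pab p A B a b *
        (Real.logb 2 (Pab p A B a b) - Real.logb 2 (FX p A B X a b * GY p A B Y a b))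
        = Pab p A B a b * (Real.logb 2 (Pab p A B a b) - Real.logb 2 (FX p A B X a b))
          + Pab p A B a b * (Real.logb 2 (Pab p A B a b) - Real.logb 2 (GY p A B Y a b))
          - Pab p A B a b * Real.logb 2 (Pab p A B a b) := by
      intro a b
      by_cases h : Pab p A B a b = 0
      · rw [h]; ring
      · have hpos : 0 < Pab p A B a b := lt_of_le_of_ne (nnPab a b) (Ne.symm h)
        rw [Real.logb_mul (ne_of_gt (posF a b hpos)) (ne_of_gt (posG a b hpos))]
        ring
    simp only [pw, Finset.sum_add_distrib, Finset.sum_sub_distrib]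
  -- mutual information identity
  have hMI : mi p A B = (∑ a, ∑ b, Pab p A B a b * Real.logb 2 (Pab p A B a b))
      - (∑ a, Pa p A a * Real.logb 2 (Pa p A a))
      - (∑ b, Pb p B b * Real.logb 2 (Pb p B b)) := by
    rw [mi_AB_sum p A B]
    have dA : (∑ a, ∑ b, Pab p A B a b * Real.logb 2 (Pa p A a))
        = ∑ a, Pa p A a * Real.logb 2 (Pa p A a) := by
      refine Finset.sum_congr rfl fun a _ => ?_
      rw [← Finset.sum_mul, sum_Pab_b]
    have dB : (∑ a, ∑ b, Pab p A B a b * Real.logb 2 (Pb p B b))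
        = ∑ b, Pb p B b * Real.logb 2 (Pb p B b) := by
      rw [Finset.sum_comm]
      refine Finset.sum_congr rfl fun b _ => ?_
      rw [← Finset.sum_mul, sum_Pab_a]
    simp only [mul_sub, Finset.sum_sub_distrib]
    rw [dA, dB]
  linarith [hI1, hI2, hI3, hSplit, hMI]


end Main

end ZYaux


/-- The [ZY97] conditional inequality: if `I(X:Y) = 0` and `I(X:Y|A) = 0` then
`I(A:B) ≤ I(A:B|X) + I(A:B|Y)`. -/
theorem stmt_14 {Ω α β χ υ : Type*}
    [Fintype Ω] [Fintype α] [Fintype β] [Fintype χ] [Fintype υ]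
    (p : Ω → ℝ) (hp : IsPMF p)
    (A : Ω → α) (B : Ω → β) (X : Ω → χ) (Y : Ω → υ)
    (h1 : mi p X Y = 0) (h2 : cmi p X Y A = 0) :
    mi p A B ≤ cmi p A B X + cmi p A B Y :=
  ZYaux.main p A B X Y hp h1 h2
end
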